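/- arXiv:1107.3549 — 6 statements merged into one kernel-verified Lean document; each statement's English description precedes it below -/
import Mathlib

section
/- Let p be a prime and n ≥ 2. For every index 1 ≤ i ≤ n−1 and every t ∈ 1 + pℤ_p, the diagonal matrix h_{i,i+1}(t) ∈ SL_n(ℤ_p), whose diagonal entries are 1 except for the entry t in position (i,i) and the entry t^{−1} in position (i+1,i+1), belongs to the subgroup K_*(p). -/
open Matrix in
private lemma key {R : Type*} [CommRing R] {m : Type*} [Fintype m] [DecidableEq m]
    (i j : m) (h : i ≠ j) (u : Rˣ) :
    transvection j i ((1 - (u : R)) * ((u⁻¹ : Rˣ) : R)) *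
      (transvection i j 1 *
        (transvection j i ((u : R) - 1) * transvection i j (-((u⁻¹ : Rˣ) : R)))) =
    diagonal (fun k => if k = i then (u : R) else if k = j then ((u⁻¹ : Rˣ) : R) else 1) := by
  have hui : (u : R) * ((u⁻¹ : Rˣ) : R) = 1 := by
    rw [← Units.val_mul, mul_inv_cancel, Units.val_one]
  ext k l
  rw [diagonal_apply]
  by_cases hki : k = i
  · by_cases hli : l = i
    · simp only [transvection_mul_apply_same, transvection_mul_apply_of_ne,
        hki, hli, h, h.symm, Ne.symm h, ne_eq, not_false_eq_true]
      simp [transvection, Matrix.add_apply, Matrix.one_apply, h, h.symm, Ne.symm h]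
    · by_cases hlj : l = j
      · simp only [transvection_mul_apply_same, transvection_mul_apply_of_ne,
          hki, hlj, h, h.symm, Ne.symm h, ne_eq, not_false_eq_true]
        simp [transvection, Matrix.add_apply, Matrix.one_apply, h, h.symm, Ne.symm h,
          hli, Ne.symm hli]
        linear_combination -hui
      · simp only [transvection_mul_apply_same, transvection_mul_apply_of_ne,
          hki, h, h.symm, Ne.symm h, ne_eq, not_false_eq_true]
        simp [transvection, Matrix.add_apply, Matrix.one_apply, h, h.symm, Ne.symm h,
          hli, hlj, Ne.symm hli, Ne.symm hlj]
  · by_cases hkj : k = j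
    · by_cases hli : l = i
      · simp only [transvection_mul_apply_same, transvection_mul_apply_of_ne,
          hkj, hli, h, h.symm, Ne.symm h, hki, ne_eq, not_false_eq_true]
        simp [transvection, Matrix.add_apply, Matrix.one_apply, h, h.symm, Ne.symm h, hki]
      · by_cases hlj : l = j
        · simp only [transvection_mul_apply_same, transvection_mul_apply_of_ne,
            hkj, hlj, h, h.symm, Ne.symm h, hki, ne_eq, not_false_eq_true]
          simp [transvection, Matrix.add_apply, Matrix.one_apply, h, h.symm, Ne.symm h,
            hki, hli, Ne.symm hli]
          linear_combination ((u:R)*((u⁻¹:Rˣ):R) - 1 - ((u⁻¹:Rˣ):R)) * hui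
        · simp only [transvection_mul_apply_same, transvection_mul_apply_of_ne,
            hkj, h, h.symm, Ne.symm h, hki, ne_eq, not_false_eq_true]
          simp [transvection, Matrix.add_apply, Matrix.one_apply, h, h.symm, Ne.symm h,
            hki, hli, hlj, Ne.symm hli, Ne.symm hlj]
    · simp only [transvection_mul_apply_of_ne _ _ _ _ (show k ≠ j from hkj),
        transvection_mul_apply_of_ne _ _ _ _ (show k ≠ i from hki)]
      have h1 : ¬i = k := fun h' => hki h'.symm
      have h2 : ¬j = k := fun h' => hkj h'.symm
      by_cases hkl : k = l
      · subst hkl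
        simp [transvection, Matrix.add_apply, Matrix.one_apply, hki, hkj,
          Matrix.single_apply_of_ne _ _ _ _ _ (by tauto : ¬(i = k ∧ j = k))]
      · simp [transvection, Matrix.add_apply, Matrix.one_apply, hki, hkj, hkl,
          Matrix.single_apply_of_ne _ _ _ _ _ (by tauto : ¬(i = k ∧ j = l))]

/-- The subgroup `K_*(p)` of `SL_n(ℤ_p)` generated by the elementary matrices
`e_ij(t) = 1 + t·E_ij` with `t ∈ ℤ_p` for `i < j` and `t ∈ p^(i-j)·ℤ_p` for `i > j`. -/
noncomputable def Kstar (p : ℕ) [Fact p.Prime] (n : ℕ) :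
    Subgroup (Matrix.SpecialLinearGroup (Fin n) ℤ_[p]) :=
  Subgroup.closure
    { g | ∃ (i j : Fin n) (t : ℤ_[p]),
        (g : Matrix (Fin n) (Fin n) ℤ_[p]) = Matrix.transvection i j t ∧
        (i < j ∨ (j < i ∧ (p : ℤ_[p]) ^ ((i : ℕ) - (j : ℕ)) ∣ t)) }

/-- For every `1 ≤ i ≤ n-1` and every unit `t ∈ 1 + pℤ_p`, the diagonal matrix
`h_{i,i+1}(t)` with diagonal entries `1` except for `t` at position `(i,i)` and `t⁻¹` at
position `(i+1,i+1)` belongs to `K_*(p)`. -/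
theorem diagonal_mem_Kstar (p : ℕ) [Fact p.Prime] (n : ℕ) (hn : 2 ≤ n)
    (i : Fin n) (hi : (i : ℕ) + 1 < n) (t : ℤ_[p]ˣ) (ht : (p : ℤ_[p]) ∣ ((t : ℤ_[p]) - 1))
    (γ : Matrix.SpecialLinearGroup (Fin n) ℤ_[p])
    (hγ : (γ : Matrix (Fin n) (Fin n) ℤ_[p]) =
      Matrix.diagonal (fun k : Fin n =>
        if k = i then (t : ℤ_[p])
        else if (k : ℕ) = (i : ℕ) + 1 then ((t⁻¹ : ℤ_[p]ˣ) : ℤ_[p]) else 1)) :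
    γ ∈ Kstar p n := by

  classical
  set j : Fin n := ⟨(i : ℕ) + 1, hi⟩ with hj
  have hij : i < j := by simp [hj, Fin.lt_def]
  have hne : i ≠ j := ne_of_lt hij
  have hd : ((p : ℤ_[p]) : ℤ_[p]) ∣ (1 - (t : ℤ_[p])) * ((t⁻¹ : ℤ_[p]ˣ) : ℤ_[p]) := by
    exact Dvd.dvd.mul_right (by simpa using (dvd_neg.2 ht)) _
  have hpow : ((j : ℕ) - (i : ℕ)) = 1 := by simp [hj]
  let E1 : Matrix.SpecialLinearGroup (Fin n) ℤ_[p] :=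
    ⟨Matrix.transvection j i ((1 - (t : ℤ_[p])) * ((t⁻¹ : ℤ_[p]ˣ) : ℤ_[p])),
      Matrix.det_transvection_of_ne _ _ (Ne.symm hne) _⟩
  let E2 : Matrix.SpecialLinearGroup (Fin n) ℤ_[p] :=
    ⟨Matrix.transvection i j 1, Matrix.det_transvection_of_ne _ _ hne _⟩
  let E3 : Matrix.SpecialLinearGroup (Fin n) ℤ_[p] :=
    ⟨Matrix.transvection j i ((t : ℤ_[p]) - 1),
      Matrix.det_transvection_of_ne _ _ (Ne.symm hne) _⟩
  let E4 : Matrix.SpecialLinearGroup (Fin n) ℤ_[p] :=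
    ⟨Matrix.transvection i j (-((t⁻¹ : ℤ_[p]ˣ) : ℤ_[p])),
      Matrix.det_transvection_of_ne _ _ hne _⟩
  have hE1 : E1 ∈ Kstar p n :=
    Subgroup.subset_closure ⟨j, i, _, rfl, Or.inr ⟨hij, by rw [hpow, pow_one]; exact hd⟩⟩
  have hE2 : E2 ∈ Kstar p n := Subgroup.subset_closure ⟨i, j, _, rfl, Or.inl hij⟩
  have hE3 : E3 ∈ Kstar p n :=
    Subgroup.subset_closure ⟨j, i, _, rfl, Or.inr ⟨hij, by rw [hpow, pow_one]; exact ht⟩⟩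
  have hE4 : E4 ∈ Kstar p n := Subgroup.subset_closure ⟨i, j, _, rfl, Or.inl hij⟩
  have hγ' : γ = E1 * (E2 * (E3 * E4)) := by
    apply Subtype.ext
    have hc : ((E1 * (E2 * (E3 * E4)) : Matrix.SpecialLinearGroup (Fin n) ℤ_[p]) :
        Matrix (Fin n) (Fin n) ℤ_[p]) =
        Matrix.transvection j i ((1 - (t : ℤ_[p])) * ((t⁻¹ : ℤ_[p]ˣ) : ℤ_[p])) *
          (Matrix.transvection i j 1 *
            (Matrix.transvection j i ((t : ℤ_[p]) - 1) *
              Matrix.transvection i j (-((t⁻¹ : ℤ_[p]ˣ) : ℤ_[p])))) := rfl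
    rw [hγ, hc, key i j hne t]
    refine congrArg Matrix.diagonal (funext fun k => ?_)
    have hiff : (k = j) ↔ ((k : ℕ) = (i : ℕ) + 1) := Fin.ext_iff
    by_cases hki : k = i
    · simp [hki]
    · by_cases hkj : k = j
      · simp [hki, hkj, hiff.mp hkj, hj]
      · have h3 : ¬((k : ℕ) = (i : ℕ) + 1) := fun hc => hkj (hiff.mpr hc)
        simp [hki, hkj, h3]
  rw [hγ']
  exact mul_mem hE1 (mul_mem hE2 (mul_mem hE3 hE4))
end

section
/- Let m ∈ ℤ_p[X] be a monic polynomial of degree d and write m(X) = ∏_{i=1}^d (X − μ_i) over an algebraic closure K of ℚ_p. For any α ∈ ℚ, the polynomial m_α(X) = ∏_{i : v_p(μ_i) ≠ α} (X − μ_i) has all of its coefficients in ℤ_p; that is, m_α lies in ℤ_p[X] (in particular its coefficients lie in ℚ_p). -/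
open Polynomial
open scoped Classical

/-- The `p`-adic valuation (normalized by `v_p(p) = 1`) on the algebraic closure of
`ℚ_p`, extending the valuation of `ℚ_p`: for `x ≠ 0` algebraic over `ℚ_p` with minimal
polynomial `f` of degree `n`, `v_p(x) = v_p(f(0))/n`; and `v_p(0) = ⊤`. -/
noncomputable def padicValExt (p : ℕ) [Fact p.Prime] (x : AlgebraicClosure ℚ_[p]) :
    WithTop ℚ :=
  if x = 0 then ⊤
  else ((((minpoly ℚ_[p] x).coeff 0).valuation : ℚ) /
          ((minpoly ℚ_[p] x).natDegree : ℚ) : ℚ)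

section aux

variable (p : ℕ) [Fact p.Prime]

local notation "K" => AlgebraicClosure ℚ_[p]

lemma padicValExt_algEquiv (σ : K ≃ₐ[ℚ_[p]] K) (x : K) :
    padicValExt p (σ x) = padicValExt p x := by
  simp [padicValExt, EmbeddingLike.map_eq_zero_iff, minpoly.algEquiv_eq]

lemma fixed_mem_range {x : K} (hx : ∀ σ : K ≃ₐ[ℚ_[p]] K, σ x = x) :
    ∃ b : ℚ_[p], algebraMap ℚ_[p] K b = x := by
  have hint : IsIntegral ℚ_[p] x := Algebra.IsIntegral.isIntegral x
  by_contra h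
  have hx' : x ∉ (⊥ : Subalgebra ℚ_[p] K) := by
    simpa [Algebra.mem_bot, Set.mem_range] using h
  obtain ⟨y, hne, hconj⟩ :=
    (notMem_iff_exists_ne_and_isConjRoot ((minpoly.irreducible hint).separable)
      (IsAlgClosed.splits _)).mp hx'
  obtain ⟨σ, hσ⟩ := hconj.exists_algEquiv
  apply hne
  have := congrArg σ.symm hσ
  simpa [hx σ.symm] using this.symm

lemma slope_aux (d : ℕ)
    (m : Polynomial ℤ_[p]) (hm : m.Monic)
    (μ : Fin d → K)
    (hroots : m.map ((algebraMap ℚ_[p] K).comp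
        (algebraMap ℤ_[p] ℚ_[p])) = ∏ i, (X - C (μ i)))
    (α : ℚ) :
    ∃ q : Polynomial ℤ_[p],
      q.map ((algebraMap ℚ_[p] K).comp (algebraMap ℤ_[p] ℚ_[p])) =
        ∏ i ∈ Finset.univ.filter (fun i => padicValExt p (μ i) ≠ (α : WithTop ℚ)),
          (X - C (μ i)) := by
  classical
  set φ : ℤ_[p] →+* K := (algebraMap ℚ_[p] K).comp (algebraMap ℤ_[p] ℚ_[p]) with hφ
  have hφK : algebraMap ℤ_[p] K = φ := IsScalarTower.algebraMap_eq ℤ_[p] ℚ_[p] K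
  have hμint : ∀ i, IsIntegral ℤ_[p] (μ i) := by
    intro i
    refine ⟨m, hm, ?_⟩
    have : (m.map φ).eval (μ i) = 0 := by
      rw [hroots, eval_prod]
      exact Finset.prod_eq_zero (Finset.mem_univ i) (by simp)
    rwa [eval_map, ← hφK] at this
  set pred : K → Prop := fun x => padicValExt p x ≠ (α : WithTop ℚ) with hpred
  set S : Finset (Fin d) :=
    Finset.univ.filter (fun i => padicValExt p (μ i) ≠ (α : WithTop ℚ)) with hSdef
  set T : Multiset K := S.val.map μ with hT
  set P : Polynomial K := (T.map fun a => X - C a).prod with hP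
  have hPeq : (∏ i ∈ S, (X - C (μ i))) = P := by
    rw [hP, hT, Finset.prod_eq_multiset_prod, Multiset.map_map]
    rfl
  have hTM : T = (Finset.univ.val.map μ).filter pred := by
    rw [Multiset.filter_map, hT, hSdef, Finset.filter_val]
    all_goals exact congrArg _ (Multiset.filter_congr fun x _ => Iff.rfl)
  rw [hPeq, ← Polynomial.mem_lifts, Polynomial.lifts_iff_coeff_lifts]
  intro n
  have hfull : ∀ σ : K ≃ₐ[ℚ_[p]] K, (Finset.univ.val.map μ).map σ = Finset.univ.val.map μ := by
    intro σ
    have h1 : (m.map φ).map (σ : K →+* K) = m.map φ := by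
      rw [Polynomial.map_map]
      congr 1
      ext x
      simp [hφ]
    rw [hroots] at h1
    have h2 : (∏ i, (X - C (μ i))).map (σ : K →+* K)
        = (((Finset.univ.val.map μ).map σ).map fun a => X - C a).prod := by
      rw [Finset.prod_eq_multiset_prod, Polynomial.map_multiset_prod, Multiset.map_map,
        Multiset.map_map, Multiset.map_map]
      congr 1
      apply Multiset.map_congr rfl
      intro x _
      simp
    have h3 : ((((Finset.univ.val.map μ).map σ).map fun a => X - C a).prod).roots
        = (((Finset.univ.val.map μ).map fun a => X - C a).prod).roots := by
      rw [← h2, h1, Finset.prod_eq_multiset_prod, Multiset.map_map]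
      rfl
    rwa [roots_multiset_prod_X_sub_C, roots_multiset_prod_X_sub_C] at h3
  have hfix : ∀ σ : K ≃ₐ[ℚ_[p]] K, σ (P.coeff n) = P.coeff n := by
    intro σ
    have hpredσ : ∀ x : K, pred (σ x) ↔ pred x := by
      intro x
      rw [hpred]
      simp only [ne_eq, padicValExt_algEquiv]
    have hTσ : T.map σ = T := by
      conv_rhs => rw [hTM, ← hfull σ, Multiset.filter_map]
      rw [hTM]
      congr 1
      apply Multiset.filter_congr
      intro x _
      exact (hpredσ x).symm
    have hmap : P.map (σ : K →+* K) = P := by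
      rw [hP, Polynomial.map_multiset_prod, Multiset.map_map]
      conv_rhs => rw [← hTσ, Multiset.map_map]
      apply congrArg
      apply Multiset.map_congr rfl
      intro x _
      simp
    conv_rhs => rw [← hmap, coeff_map]
    rfl
  have hcoeffint : IsIntegral ℤ_[p] (P.coeff n) := by
    have hTint : ∀ x ∈ T, IsIntegral ℤ_[p] x := by
      intro x hx
      rw [hT, Multiset.mem_map] at hx
      obtain ⟨i, -, rfl⟩ := hx
      exact hμint i
    set A := integralClosure ℤ_[p] K
    set T' : Multiset A := T.attach.map fun x => (⟨x.1, hTint x.1 x.2⟩ : A) with hT'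
    have hT'map : T'.map (algebraMap A K) = T := by
      rw [hT', Multiset.map_map]
      exact (Multiset.map_congr rfl fun x _ => rfl).trans (Multiset.attach_map_val T)
    set Q : Polynomial A := (T'.map fun a => X - C a).prod with hQ
    have hQmap : Q.map (algebraMap A K) = P := by
      rw [hQ, hP, Polynomial.map_multiset_prod, hT']
      simp only [Multiset.map_map]
      conv_rhs => rw [← Multiset.attach_map_val T, Multiset.map_map]
      congr 1
      apply Multiset.map_congr rfl
      intro x _
      simp only [Function.comp_apply, Polynomial.map_sub, map_X, map_C]
      rfl
    have : P.coeff n = algebraMap A K (Q.coeff n) := by rw [← hQmap, coeff_map]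
    rw [this]
    exact (Q.coeff n).2
  obtain ⟨b, hb⟩ := fixed_mem_range p hfix
  have hbint : IsIntegral ℤ_[p] b := by
    rw [← isIntegral_algebraMap_iff (algebraMap ℚ_[p] K).injective, hb]
    exact hcoeffint
  obtain ⟨a, ha⟩ := IsIntegrallyClosed.isIntegral_iff.mp hbint
  exact ⟨a, by rw [hφ, RingHom.comp_apply, ha, hb]⟩

end aux

/-- Let `m ∈ ℤ_p[X]` be monic of degree `d` with roots `μ_1, …, μ_d` in an algebraic
closure of `ℚ_p`. For any `α ∈ ℚ`, the polynomial `m_α(X) = ∏_{v_p(μ_i) ≠ α} (X - μ_i)`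
has all its coefficients in `ℤ_p`. -/
theorem slope_factor_mem_padicInt (p : ℕ) [Fact p.Prime] (d : ℕ)
    (m : Polynomial ℤ_[p]) (hm : m.Monic) (hd : m.natDegree = d)
    (μ : Fin d → AlgebraicClosure ℚ_[p])
    (hroots : m.map ((algebraMap ℚ_[p] (AlgebraicClosure ℚ_[p])).comp
        (algebraMap ℤ_[p] ℚ_[p])) = ∏ i, (X - C (μ i)))
    (α : ℚ) :
    ∃ q : Polynomial ℤ_[p],
      q.map ((algebraMap ℚ_[p] (AlgebraicClosure ℚ_[p])).comp (algebraMap ℤ_[p] ℚ_[p])) =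
        ∏ i ∈ Finset.univ.filter (fun i => padicValExt p (μ i) ≠ (α : WithTop ℚ)),
          (X - C (μ i)) := by
  exact slope_aux p d m hm μ hroots α
end

section
/- Let p be a prime, let r ≥ 1 be an integer and let k be an integer with 0 ≤ k < r. If a, a' ∈ ℤ satisfy a ≡ a' (mod p^{⌈(p/(p−1))·r⌉}), then C(a, k) ≡ C(a', k) (mod p^r). -/
/-- Let `p` be a prime, `r ≥ 1` and `0 ≤ k < r`. If `a ≡ a' (mod p^⌈(p/(p-1))·r⌉)` then
`C(a,k) ≡ C(a',k) (mod p^r)`, where `C(z,k) = z(z-1)⋯(z-k+1)/k!` is the integer-valued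
binomial coefficient. -/
theorem choose_modEq_of_modEq (p : ℕ) (hp : p.Prime) (r : ℕ) (hr : 1 ≤ r)
    (k : ℕ) (hk : k < r) (a a' : ℤ)
    (h : a ≡ a' [ZMOD (p : ℤ) ^ (⌈((p : ℚ) / ((p : ℚ) - 1)) * (r : ℚ)⌉).toNat]) :
    Ring.choose a k ≡ Ring.choose a' k [ZMOD (p : ℤ) ^ r] := by
  haveI : Fact p.Prime := ⟨hp⟩
  have hp2 := hp.two_le
  set M := (⌈((p : ℚ) / ((p : ℚ) - 1)) * (r : ℚ)⌉).toNat with hMdef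
  set v := padicValNat p (Nat.factorial k) with hvdef
  -- Legendre bound: v * (p - 1) ≤ k
  have hvk : (p - 1) * v ≤ k := by
    have h0 := sub_one_mul_padicValNat_factorial (p := p) k
    rw [← hvdef] at h0
    rw [h0]
    exact Nat.sub_le _ _
  -- r + v ≤ M
  have hrvM : r + v ≤ M := by
    have hp1 : (1 : ℚ) ≤ (p : ℚ) - 1 := by
      have : (2 : ℚ) ≤ (p : ℚ) := by exact_mod_cast hp2
      linarith
    have hvq : (v : ℚ) * ((p : ℚ) - 1) ≤ (k : ℚ) := by
      have : ((p - 1) * v : ℕ) ≤ (k : ℕ) := hvk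
      have h2 : (((p - 1) * v : ℕ) : ℚ) ≤ (k : ℚ) := by exact_mod_cast this
      have h3 : ((p - 1 : ℕ) : ℚ) = (p : ℚ) - 1 := by
        have : (1 : ℕ) ≤ p := by omega
        push_cast [this]; ring
      rw [Nat.cast_mul, h3, mul_comm] at h2
      exact h2
    have hq : ((r + v : ℕ) : ℚ) ≤ (p : ℚ) / ((p : ℚ) - 1) * (r : ℚ) := by
      rw [div_mul_eq_mul_div, le_div_iff₀ (by linarith)]
      have hkr : (k : ℚ) ≤ (r : ℚ) - 1 := by
        have : (k : ℚ) + 1 ≤ (r : ℚ) := by exact_mod_cast hk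
        linarith
      push_cast
      nlinarith
    have hz : ((r + v : ℕ) : ℤ) ≤ ⌈((p : ℚ) / ((p : ℚ) - 1)) * (r : ℚ)⌉ := by
      have := hq.trans (Int.le_ceil _)
      exact_mod_cast this
    omega
  -- divisibility of the difference of descPochhammer evaluations
  have hdvd : ((p : ℤ)) ^ M ∣ (descPochhammer ℤ k).eval a' - (descPochhammer ℤ k).eval a :=
    dvd_trans h.dvd (Polynomial.sub_dvd_eval_sub a' a _)
  have keval : ∀ z : ℤ, (descPochhammer ℤ k).eval z = (Nat.factorial k : ℤ) * Ring.choose z k := by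
    intro z
    rw [Polynomial.eval_eq_smeval, Ring.descPochhammer_eq_factorial_smul_choose, nsmul_eq_mul]
  set d : ℤ := Ring.choose a' k - Ring.choose a k with hd
  have hdvd2 : ((p : ℤ)) ^ M ∣ (Nat.factorial k : ℤ) * d := by
    rw [hd, mul_sub, ← keval a', ← keval a]; exact hdvd
  set m := Nat.factorial k / p ^ v with hm
  have hfac : (Nat.factorial k : ℕ) = p ^ v * m := by
    rw [hm, Nat.mul_div_cancel' pow_padicValNat_dvd]
  have hpm : ¬ p ∣ m := by
    intro hdm
    have : p ^ (v + 1) ∣ Nat.factorial k := by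
      rw [hfac, pow_succ]
      exact Nat.mul_dvd_mul dvd_rfl hdm
    exact pow_succ_padicValNat_not_dvd (Nat.factorial_ne_zero k) this
  -- cancel p^v
  have hsplit : ((p : ℤ)) ^ M = (p : ℤ) ^ v * (p : ℤ) ^ (M - v) := by
    rw [← pow_add]; congr 1; omega
  have hdvd3 : ((p : ℤ)) ^ (M - v) ∣ (m : ℤ) * d := by
    have h1 : (p : ℤ) ^ v * (p : ℤ) ^ (M - v) ∣ (p : ℤ) ^ v * ((m : ℤ) * d) := by
      rw [← hsplit]
      have : ((Nat.factorial k : ℕ) : ℤ) = (p : ℤ) ^ v * (m : ℤ) := by exact_mod_cast hfac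
      rw [← mul_assoc, ← this]
      exact hdvd2
    have hpv : ((p : ℤ)) ^ v ≠ 0 := by positivity
    exact (mul_dvd_mul_iff_left hpv).mp h1
  have hcop : IsCoprime ((p : ℤ) ^ (M - v)) (m : ℤ) := by
    apply IsCoprime.pow_left
    rw [Int.isCoprime_iff_gcd_eq_one, Int.gcd_natCast_natCast]
    exact hp.coprime_iff_not_dvd.mpr hpm
  have hdvd4 : ((p : ℤ)) ^ (M - v) ∣ d := hcop.dvd_of_dvd_mul_left hdvd3
  have hdvd5 : ((p : ℤ)) ^ r ∣ d := dvd_trans (pow_dvd_pow _ (by omega)) hdvd4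
  exact (Int.modEq_iff_dvd.mpr hdvd5)
end

section
/- Let p be a prime, let r ≥ 1 be an integer, let I be a finite index set, and let (b_i)_{i∈I} be natural numbers with ∑_{i∈I} b_i < r. If (a_i)_{i∈I} and (a'_i)_{i∈I} are integers with a_i ≡ a'_i (mod p^{⌈(p/(p−1))·r⌉}) for every i ∈ I, then ∏_{i∈I} C(a_i, b_i) ≡ ∏_{i∈I} C(a'_i, b_i) (mod p^r). -/
open Finset Polynomial

private lemma ring_choose_succ_identity (c : ℤ) (j : ℕ) :
    ((j + 1 : ℕ) : ℤ) * Ring.choose c (j + 1) = c * Ring.choose (c - 1) j := by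
  have h1 : ((j + 1).factorial : ℤ) * Ring.choose c (j + 1)
      = (descPochhammer ℤ (j + 1)).eval c := by
    rw [Polynomial.eval_eq_smeval, Ring.descPochhammer_eq_factorial_smul_choose, nsmul_eq_mul]
  have h2 : ((j).factorial : ℤ) * Ring.choose (c - 1) j
      = (descPochhammer ℤ j).eval (c - 1) := by
    rw [Polynomial.eval_eq_smeval, Ring.descPochhammer_eq_factorial_smul_choose, nsmul_eq_mul]
  have h3 : (descPochhammer ℤ (j + 1)).eval c
      = c * (descPochhammer ℤ j).eval (c - 1) := by
    rw [descPochhammer_succ_left]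
    simp [eval_comp]
  have hfac : ((j).factorial : ℤ) ≠ 0 := by exact_mod_cast j.factorial_ne_zero
  apply mul_left_cancel₀ hfac
  have h4 : ((j).factorial : ℤ) * (((j + 1 : ℕ) : ℤ) * Ring.choose c (j + 1))
      = ((j + 1).factorial : ℤ) * Ring.choose c (j + 1) := by
    rw [Nat.factorial_succ]; push_cast; ring
  rw [h4, h1, h3, ← h2]; ring

private lemma pow_dvd_ring_choose {p : ℕ} (hp : p.Prime) {M r : ℕ} {c : ℤ} {j : ℕ}
    (hc : (p : ℤ) ^ M ∣ c) (hj : 0 < j) (hM : r + padicValNat p j ≤ M) :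
    (p : ℤ) ^ r ∣ Ring.choose c j := by
  haveI : Fact p.Prime := ⟨hp⟩
  set v := padicValNat p j with hv
  obtain ⟨u, hu⟩ := (pow_padicValNat_dvd : p ^ v ∣ j)
  have hpu : ¬ p ∣ u := by
    intro hdvd
    obtain ⟨w, hw⟩ := hdvd
    refine pow_succ_padicValNat_not_dvd (p := p) hj.ne' ⟨w, ?_⟩
    conv_lhs => rw [hu, hw]
    rw [pow_succ]; ring
  obtain ⟨j', rfl⟩ := Nat.exists_eq_succ_of_ne_zero hj.ne'
  have hid := ring_choose_succ_identity c j'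
  have hdvd1 : (p : ℤ) ^ M ∣ ((j' + 1 : ℕ) : ℤ) * Ring.choose c (j' + 1) := by
    rw [hid]; exact hc.mul_right _
  have hdvd2 : (p : ℤ) ^ v * (p : ℤ) ^ r ∣ ((j' + 1 : ℕ) : ℤ) * Ring.choose c (j' + 1) := by
    rw [← pow_add]
    exact dvd_trans (pow_dvd_pow _ (by omega)) hdvd1
  have hji : ((j' + 1 : ℕ) : ℤ) = (p : ℤ) ^ v * (u : ℤ) := by exact_mod_cast hu
  rw [hji, mul_assoc] at hdvd2
  have hpvne : ((p : ℤ) ^ v) ≠ 0 := by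
    have : (p : ℤ) ≠ 0 := by exact_mod_cast hp.pos.ne'
    exact pow_ne_zero _ this
  have hdvd3 : (p : ℤ) ^ r ∣ (u : ℤ) * Ring.choose c (j' + 1) :=
    (mul_dvd_mul_iff_left hpvne).mp hdvd2
  have hcop : IsCoprime ((p : ℤ) ^ r) (u : ℤ) := by
    apply IsCoprime.pow_left
    rw [Int.isCoprime_iff_gcd_eq_one, Int.gcd_natCast_natCast]
    exact hp.coprime_iff_not_dvd.mpr hpu
  exact hcop.dvd_of_dvd_mul_left hdvd3

private lemma padic_bound {p : ℕ} (hp : p.Prime) {r j : ℕ} (hj : 0 < j) (hjr : j < r) :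
    r + padicValNat p j ≤ (⌈((p : ℚ) / ((p : ℚ) - 1)) * (r : ℚ)⌉).toNat := by
  set v := padicValNat p j with hv
  have hpv : p ^ v ≤ j := Nat.le_of_dvd hj pow_padicValNat_dvd
  have hp1 : (1 : ℚ) < (p : ℚ) := by exact_mod_cast hp.one_lt
  have hq : (0 : ℚ) < (p : ℚ) - 1 := by linarith
  have hbern : (1 : ℚ) + (v : ℚ) * ((p : ℚ) - 1) ≤ (p : ℚ) ^ v := by
    have h := one_add_mul_le_pow (a := (p : ℚ) - 1) (by linarith) v
    have e : (1 : ℚ) + ((p : ℚ) - 1) = (p : ℚ) := by ring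
    rw [e] at h
    exact h
  have hjq : ((p : ℚ)) ^ v ≤ (j : ℚ) := by exact_mod_cast hpv
  have hjrq : (j : ℚ) + 1 ≤ (r : ℚ) := by exact_mod_cast hjr
  have hkey : ((r : ℚ) + (v : ℚ)) ≤ ((p : ℚ) / ((p : ℚ) - 1)) * (r : ℚ) := by
    rw [div_mul_eq_mul_div, le_div_iff₀ hq]
    nlinarith
  have hceil : ((r + v : ℕ) : ℤ) ≤ ⌈((p : ℚ) / ((p : ℚ) - 1)) * (r : ℚ)⌉ := by
    have h2 : (((r + v : ℕ) : ℤ) : ℚ) ≤ (⌈((p : ℚ) / ((p : ℚ) - 1)) * (r : ℚ)⌉ : ℚ) := by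
      push_cast
      exact le_trans hkey (Int.le_ceil _)
    exact_mod_cast h2
  omega

private lemma int_modEq_prod {I : Type*} [Fintype I] {n : ℤ} (f g : I → ℤ)
    (h : ∀ i, f i ≡ g i [ZMOD n]) : (∏ i, f i) ≡ (∏ i, g i) [ZMOD n] := by
  classical
  induction (Finset.univ : Finset I) using Finset.induction with
  | empty => simp
  | insert _ _ hx ih =>
    rw [Finset.prod_insert hx, Finset.prod_insert hx]
    exact (h _).mul ih

/-- Let `p` be a prime, `r ≥ 1`, `I` a finite index set and `(b_i)` naturals with
`∑ b_i < r`. If `a_i ≡ a'_i (mod p^⌈(p/(p-1))·r⌉)` for all `i`, then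
`∏ C(a_i, b_i) ≡ ∏ C(a'_i, b_i) (mod p^r)`. -/
theorem prod_choose_modEq_of_modEq (p : ℕ) (hp : p.Prime) (r : ℕ) (hr : 1 ≤ r)
    (I : Type*) [Fintype I] (b : I → ℕ) (hb : (∑ i, b i) < r)
    (a a' : I → ℤ)
    (h : ∀ i, a i ≡ a' i [ZMOD (p : ℤ) ^ (⌈((p : ℚ) / ((p : ℚ) - 1)) * (r : ℚ)⌉).toNat]) :
    (∏ i, Ring.choose (a i) (b i)) ≡ (∏ i, Ring.choose (a' i) (b i)) [ZMOD (p : ℤ) ^ r] := by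
  set M := (⌈((p : ℚ) / ((p : ℚ) - 1)) * (r : ℚ)⌉).toNat with hMdef
  apply int_modEq_prod
  intro i
  have hbi : b i < r :=
    lt_of_le_of_lt (Finset.single_le_sum (fun _ _ => Nat.zero_le _) (Finset.mem_univ i)) hb
  have hc : (p : ℤ) ^ M ∣ (a' i - a i) := (h i).dvd
  rw [Int.modEq_iff_dvd]
  have hvand := Ring.add_choose_eq (r := a i) (s := a' i - a i) (b i) (Commute.all _ _)
  rw [show a i + (a' i - a i) = a' i from by ring] at hvand
  rw [hvand]
  have hmem : ((b i, 0) : ℕ × ℕ) ∈ antidiagonal (b i) := by simp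
  rw [← Finset.add_sum_erase _ _ hmem, Ring.choose_zero_right, mul_one, add_sub_cancel_left]
  apply Finset.dvd_sum
  intro ij hij
  obtain ⟨hne, hmem'⟩ := Finset.mem_erase.mp hij
  have hsum : ij.1 + ij.2 = b i := Finset.HasAntidiagonal.mem_antidiagonal.mp hmem'
  have hij2 : 0 < ij.2 := by
    by_contra h0
    push_neg at h0
    have h2 : ij.2 = 0 := by omega
    have h1 : ij.1 = b i := by omega
    exact hne (Prod.ext h1 h2)
  have hij2r : ij.2 < r := by omega
  exact Dvd.dvd.mul_left (pow_dvd_ring_choose hp hc hij2 (padic_bound hp hij2 hij2r)) _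
end

section
/- For every positive root α ∈ Φ⁺ and every multi-index n = (n_1, …, n_s) ∈ ℕ^s, the element x_α · X₋^{·n} of the universal enveloping algebra 𝒰 lies in the ℂ-linear span of the elements X₋^{·a} · X₊^{·b} with a, b ∈ ℕ^s, together with the elements X₋^{·a} · h_γ with a ∈ ℕ^s and γ ∈ Φ⁺ (h_γ the coroot of γ). -/
open LieAlgebra LieModule

set_option maxHeartbeats 1000000
section AllAux

section XposAux

/-- merging two sorted power-monomials over a strictly increasing index list -/
private lemma prod_pow_merge {M ι : Type*} [Monoid M] [Preorder ι] (f : ι → M)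
    (p q : ι → ℕ) (hpq : ∀ i j, p i ≠ 0 → q j ≠ 0 → i ≤ j) :
    ∀ (l : List ι), l.Pairwise (· < ·) →
      (l.map fun i => f i ^ p i).prod * (l.map fun i => f i ^ q i).prod
        = (l.map fun i => f i ^ (p i + q i)).prod := by
  intro l hl
  induction l with
  | nil => simp
  | cons i l ih =>
    obtain ⟨hil, hl'⟩ := List.pairwise_cons.mp hl
    have ihl := ih hl'
    by_cases hq : q i = 0
    · simp only [List.map_cons, List.prod_cons, hq, pow_zero, one_mul, Nat.add_zero]
      rw [mul_assoc, ihl]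
    · have hpl : ∀ j ∈ l, p j = 0 := by
        intro j hj
        by_contra hpj
        exact absurd (hpq j i hpj hq) (hil j hj : i < j).not_ge
    
      have h1 : (l.map fun j => f j ^ p j).prod = 1 := by
        apply List.prod_eq_one
        intro v hv
        obtain ⟨j, hj, rfl⟩ := List.mem_map.mp hv
        rw [hpl j hj, pow_zero]
      have h2 : (l.map fun j => f j ^ (p j + q j)).prod = (l.map fun j => f j ^ q j).prod := by
        congr 1
        apply List.map_congr_left
        intro j hj
        rw [hpl j hj, Nat.zero_add]
      simp only [List.map_cons, List.prod_cons, h1, mul_one]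
      rw [h2, pow_add, mul_assoc]

private lemma prod_pow_single {M : Type*} [Monoid M] {s : ℕ} (f : Fin s → M) (m : Fin s) :
    ((List.finRange s).map fun i => f i ^ (Pi.single m 1 : Fin s → ℕ) i).prod = f m := by
  rw [List.prod_map_eq_pow_single m (fun i => f i ^ (Pi.single m 1 : Fin s → ℕ) i)
    (fun a' ha' _ => by show f a' ^ (Pi.single m 1 : Fin s → ℕ) a' = 1
                        rw [Pi.single_eq_of_ne ha', pow_zero])]
  rw [Pi.single_eq_same, pow_one, List.count_eq_one_of_mem (List.nodup_finRange s)
    (List.mem_finRange m), pow_one]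

private lemma prod_pow_zero {M : Type*} [Monoid M] {s : ℕ} (f : Fin s → M) :
    ((List.finRange s).map fun i => f i ^ (0 : Fin s → ℕ) i).prod = 1 := by
  apply List.prod_eq_one
  intro v hv
  obtain ⟨j, hj, rfl⟩ := List.mem_map.mp hv
  simp

private lemma comm_list {A : Type*} [Ring A] [Algebra ℂ A] (u : A) :
    ∀ (l : List A), (∀ v ∈ l, ∃ c : ℂ, u * v = v * u + c • v) →
      ∃ μ : ℂ, u * l.prod = l.prod * u + μ • l.prod := by
  intro l
  induction l with
  | nil => exact fun _ => ⟨0, by simp⟩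
  | cons v l ih =>
    intro h
    obtain ⟨c, hc⟩ := h v List.mem_cons_self
    obtain ⟨μ, hμ⟩ := ih fun w hw => h w (List.mem_cons_of_mem v hw)
    refine ⟨μ + c, ?_⟩
    rw [List.prod_cons]
    calc u * (v * l.prod) = (u * v) * l.prod := by rw [mul_assoc]
    _ = (v * u + c • v) * l.prod := by rw [hc]
    _ = v * (u * l.prod) + c • (v * l.prod) := by
        rw [add_mul, mul_assoc, smul_mul_assoc]
    _ = v * (l.prod * u + μ • l.prod) + c • (v * l.prod) := by rw [hμ]
    _ = (v * l.prod) * u + (μ + c) • (v * l.prod) := by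
        rw [mul_add, ← mul_assoc, mul_smul_comm, add_smul, add_assoc]

private lemma comm_pow {A : Type*} [Ring A] [Algebra ℂ A] {u v : A} {c : ℂ}
    (hc : u * v = v * u + c • v) (n : ℕ) :
    ∃ μ : ℂ, u * v ^ n = v ^ n * u + μ • v ^ n := by
  obtain ⟨μ, h⟩ := comm_list u (List.replicate n v)
    (fun w hw => by rw [List.eq_of_mem_replicate hw]; exact ⟨c, hc⟩)
  rw [List.prod_replicate] at h
  exact ⟨μ, h⟩

private lemma meas_lt {T' b N : ℕ} (h : (T' + 1) * (T' + 1) ≤ N) (hb : b ≤ T') :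
    T' * T' + b < N := by nlinarith

end XposAux

section XposAux2

variable {L : Type*} [LieRing L] [LieAlgebra ℂ L] [FiniteDimensional ℂ L]
    [LieAlgebra.IsKilling ℂ L]
    {H : LieSubalgebra ℂ L} [H.IsCartanSubalgebra]

/-- in a 1-dimensional root space, every vector is a multiple of a fixed nonzero one -/
private lemma span_root {χ : H → ℂ} (h1 : Module.finrank ℂ (rootSpace H χ) = 1)
    {v z : L} (hv : v ∈ rootSpace H χ) (hv0 : v ≠ 0) (hz : z ∈ rootSpace H χ) :
    ∃ c : ℂ, z = c • v := by
  have hle : Submodule.span ℂ {v} ≤ (rootSpace H χ : Submodule ℂ L) := by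
    rw [Submodule.span_le, Set.singleton_subset_iff]
    exact hv
  have h2 : Submodule.span ℂ {v} = (rootSpace H χ : Submodule ℂ L) := by
    apply Submodule.eq_of_le_of_finrank_le hle
    rw [finrank_span_singleton hv0]
    exact h1.le
  have hz' : z ∈ Submodule.span ℂ {v} := by rw [h2]; exact hz
  obtain ⟨c, hc⟩ := Submodule.mem_span_singleton.mp hz'
  exact ⟨c, hc.symm⟩

/-- the bracket of opposite root vectors is a multiple of the coroot -/
private lemma brk_coroot {α : Weight ℂ H L} (hα : α.IsNonZero) {z f : L}
    (hz : z ∈ rootSpace H α) (hf : f ∈ rootSpace H (-⇑α)) :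
    ∃ c : ℂ, ⁅z, f⁆ = c • ((LieAlgebra.IsKilling.coroot α : H) : L) := by
  have h1 := LieAlgebra.IsKilling.lie_eq_killingForm_smul_of_mem_rootSpace_of_mem_rootSpace_neg
    (α := α) hz hf
  set r : ℂ := α ((LieAlgebra.IsKilling.cartanEquivDual H).symm α) with hr
  have hr0 : r ≠ 0 := LieAlgebra.IsKilling.root_apply_cartanEquivDual_symm_ne_zero hα
  have h2 : ((LieAlgebra.IsKilling.cartanEquivDual H).symm (α : Module.Dual ℂ H) : H)
      = (r * 2⁻¹) • LieAlgebra.IsKilling.coroot α := by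
    rw [LieAlgebra.IsKilling.coroot, ← Nat.cast_smul_eq_nsmul ℂ, smul_smul, smul_smul]
    convert (one_smul ℂ ((LieAlgebra.IsKilling.cartanEquivDual H).symm
      (α : Module.Dual ℂ H) : H)).symm using 2
    push_cast
    field_simp
    rw [← hr]; exact div_self hr0
  refine ⟨killingForm ℂ L z f * (r * 2⁻¹), ?_⟩
  rw [h1, h2]
  rw [show (((r * 2⁻¹) • LieAlgebra.IsKilling.coroot α : H) : L)
      = (r * 2⁻¹) • ((LieAlgebra.IsKilling.coroot α : H) : L) from rfl, smul_smul]

end XposAux2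

section XposAux3

private def invm {s : ℕ} (p : Fin s → ℕ) (m : Fin s) (q : Fin s → ℕ) : ℕ :=
  (∑ j, if m < j then p j else 0) + (∑ j, if j < m then q j else 0)

private lemma sum_single {s : ℕ} (i : Fin s) : (∑ j, (Pi.single i 1 : Fin s → ℕ) j) = 1 := by
  simp [Pi.single_apply]

private lemma sum_update {s : ℕ} (q : Fin s → ℕ) (i : Fin s) (h : q i ≠ 0) :
    (∑ j, Function.update q i (q i - 1) j) + 1 = ∑ j, q j := by
  rw [Finset.sum_update_of_mem (Finset.mem_univ i),
    ← Finset.add_sum_erase _ q (Finset.mem_univ i), Finset.sdiff_singleton_eq_erase]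
  omega

private lemma update_decomp {s : ℕ} (q : Fin s → ℕ) (i : Fin s) (h : q i ≠ 0) :
    q = (Pi.single i 1 : Fin s → ℕ) + Function.update q i (q i - 1) := by
  funext j
  by_cases hji : j = i
  · subst hji
    simp only [Pi.add_apply, Pi.single_eq_same, Function.update_self]
    omega
  · simp [Pi.single_eq_of_ne hji, Function.update_of_ne hji]

private lemma invm_le {s : ℕ} (p : Fin s → ℕ) (m : Fin s) (q : Fin s → ℕ) :
    invm p m q ≤ (∑ j, p j) + ∑ j, q j := by
  unfold invm
  have h1 : (∑ j, if m < j then p j else 0) ≤ ∑ j, p j :=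
    Finset.sum_le_sum (fun j _ => by split <;> omega)
  have h2 : (∑ j, if j < m then q j else 0) ≤ ∑ j, q j :=
    Finset.sum_le_sum (fun j _ => by split <;> omega)
  omega

private lemma invm_left {s : ℕ} (p q : Fin s → ℕ) (m j : Fin s) (hj : p j ≠ 0) (hmj : m < j) :
    invm (Function.update p j (p j - 1)) m ((Pi.single j 1 : Fin s → ℕ) + q) < invm p m q := by
  unfold invm
  have h2 : (∑ a, if a < m then ((Pi.single j 1 : Fin s → ℕ) + q) a else 0)
      = ∑ a, if a < m then q a else 0 := by
    apply Finset.sum_congr rfl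
    intro a _
    split
    · next ham => rw [Pi.add_apply, Pi.single_eq_of_ne (by omega), Nat.zero_add]
    · rfl
  have h1 : (∑ a, if m < a then Function.update p j (p j - 1) a else 0)
      < ∑ a, if m < a then p a else 0 := by
    apply Finset.sum_lt_sum
    · intro a _
      by_cases haj : a = j
      · subst haj; simp only [Function.update_self]; split <;> omega
      · rw [Function.update_of_ne haj]
    · refine ⟨j, Finset.mem_univ j, ?_⟩
      rw [if_pos hmj, if_pos hmj, Function.update_self]
      omega
  omega

private lemma invm_right {s : ℕ} (p q : Fin s → ℕ) (m i : Fin s) (hi : q i ≠ 0) (him : i < m) :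
    invm (p + (Pi.single i 1 : Fin s → ℕ)) m (Function.update q i (q i - 1)) < invm p m q := by
  unfold invm
  have h1 : (∑ a, if m < a then (p + (Pi.single i 1 : Fin s → ℕ)) a else 0)
      = ∑ a, if m < a then p a else 0 := by
    apply Finset.sum_congr rfl
    intro a _
    split
    · next ham => rw [Pi.add_apply, Pi.single_eq_of_ne (by omega), Nat.add_zero]
    · rfl
  have h2 : (∑ a, if a < m then Function.update q i (q i - 1) a else 0)
      < ∑ a, if a < m then q a else 0 := by
    apply Finset.sum_lt_sum
    · intro a _
      by_cases hai : a = i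
      · subst hai; simp only [Function.update_self]; split <;> omega
      · rw [Function.update_of_ne hai]
    · refine ⟨i, Finset.mem_univ i, ?_⟩
      rw [if_pos him, if_pos him, Function.update_self]
      omega
  omega

end XposAux3

end AllAux
section XposKey
attribute [local instance] LieRing.ofAssociativeRing

variable {L : Type*} [LieRing L] [LieAlgebra ℂ L] [FiniteDimensional ℂ L]
    [LieAlgebra.IsKilling ℂ L] {H : LieSubalgebra ℂ L} [H.IsCartanSubalgebra]

local notation "ιU" => UniversalEnvelopingAlgebra.ι ℂ

private noncomputable def Ym {s : ℕ} (v : Fin s → L) (a : Fin s → ℕ) :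
    UniversalEnvelopingAlgebra ℂ L :=
  ((List.finRange s).map
    (fun i => (UniversalEnvelopingAlgebra.ι ℂ (v i) : UniversalEnvelopingAlgebra ℂ L) ^ a i)).prod

private noncomputable def SS {s : ℕ} (rt : Fin s → LieModule.Weight ℂ H L) (x y : Fin s → L) :
    Submodule ℂ (UniversalEnvelopingAlgebra ℂ L) :=
  Submodule.span ℂ
    ({u | ∃ a b, u = Ym y a * Ym x b} ∪
     {u | ∃ a j, u = Ym y a *
        UniversalEnvelopingAlgebra.ι ℂ ((LieAlgebra.IsKilling.coroot (rt j) : H) : L)})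

variable {s : ℕ} {rt : Fin s → LieModule.Weight ℂ H L} {x y : Fin s → L}

private lemma Ym_mul (v : Fin s → L) (p q : Fin s → ℕ)
    (h : ∀ i j, p i ≠ 0 → q j ≠ 0 → i ≤ j) : Ym v p * Ym v q = Ym v (p + q) :=
  prod_pow_merge (fun i => ιU (v i)) p q h (List.finRange s) (List.pairwise_lt_finRange s)

private lemma Ym_single (v : Fin s → L) (m : Fin s) :
    Ym v (Pi.single m 1) = ιU (v m) :=
  prod_pow_single (fun i => ιU (v i)) m

private lemma Ym_zero (v : Fin s → L) : Ym v (0 : Fin s → ℕ) = 1 :=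
  prod_pow_zero (fun i => ιU (v i))

private lemma memSS_A (a b : Fin s → ℕ) : Ym y a * Ym x b ∈ SS rt x y :=
  Submodule.subset_span (Set.mem_union_left _ ⟨a, b, rfl⟩)

private lemma memSS_B (a : Fin s → ℕ) (j : Fin s) :
    Ym y a * ιU ((LieAlgebra.IsKilling.coroot (rt j) : H) : L) ∈ SS rt x y :=
  Submodule.subset_span (Set.mem_union_right _ ⟨a, j, rfl⟩)

private lemma memSS_Y (a : Fin s → ℕ) : Ym y a ∈ SS rt x y := by
  have := memSS_A (rt := rt) (x := x) (y := y) a 0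
  rwa [Ym_zero, mul_one] at this

private lemma comm_hY (hy : ∀ i, y i ∈ rootSpace H (-⇑(rt i))) (h : H) (a : Fin s → ℕ) :
    ∃ μ : ℂ, ιU (h : L) * Ym y a = Ym y a * ιU (h : L) + μ • Ym y a := by
  unfold Ym
  apply comm_list
  intro v hv
  obtain ⟨i, -, rfl⟩ := List.mem_map.mp hv
  have hlie : ⁅(h : L), y i⁆ = ((-⇑(rt i)) h) • y i := by
    have := LieAlgebra.IsKilling.lie_eq_smul_of_mem_rootSpace (hy i) h
    rwa [LieSubalgebra.coe_bracket_of_module] at this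
  have h2 := LieHom.map_lie (UniversalEnvelopingAlgebra.ι ℂ) (h : L) (y i)
  rw [hlie, map_smul, Ring.lie_def, eq_sub_iff_add_eq] at h2
  exact comm_pow (by rw [← h2, add_comm]) (a i)

private lemma classify (rt : Fin s → LieModule.Weight ℂ H L)
    (hpos : ∀ w : LieModule.Weight ℂ H L, w.IsNonZero →
      (∃ i, ⇑w = ⇑(rt i)) ∨ (∃ i, ⇑w = -⇑(rt i)))
    {χ : H → ℂ} (hχ : χ ≠ 0) {u : L} (hu : u ∈ rootSpace H χ) :
    u = 0 ∨ (∃ k, u ∈ rootSpace H ⇑(rt k)) ∨ (∃ m, u ∈ rootSpace H (-⇑(rt m))) := by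
  by_cases hbot : rootSpace H χ = ⊥
  · left
    rw [hbot] at hu
    simpa using hu
  · right
    set w : LieModule.Weight ℂ H L := ⟨χ, hbot⟩ with hw
    have hwnz : w.IsNonZero := fun h0 => hχ h0
    rcases hpos w hwnz with ⟨k, hk⟩ | ⟨m, hm⟩
    · exact Or.inl ⟨k, by rw [← hk]; exact hu⟩
    · exact Or.inr ⟨m, by rw [← hm]; exact hu⟩

private lemma hmid (hy : ∀ i, y i ∈ rootSpace H (-⇑(rt i)))
    (p' q' : Fin s → ℕ) (hs : ∀ i j, p' i ≠ 0 → q' j ≠ 0 → i ≤ j) (c : ℂ) (j : Fin s) :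
    Ym y p' * ιU (c • ((LieAlgebra.IsKilling.coroot (rt j) : H) : L)) * Ym y q'
      ∈ SS rt x y := by
  obtain ⟨μ, hμ⟩ := comm_hY hy (LieAlgebra.IsKilling.coroot (rt j)) q'
  rw [map_smul, mul_smul_comm, smul_mul_assoc, mul_assoc, hμ, mul_add, ← mul_assoc,
    mul_smul_comm, Ym_mul y p' q' hs]
  exact Submodule.smul_mem _ c
    (Submodule.add_mem _ (memSS_B _ j) (Submodule.smul_mem _ μ (memSS_Y _)))

end XposKey
section XposKey2
attribute [local instance] LieRing.ofAssociativeRing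

variable {L : Type*} [LieRing L] [LieAlgebra ℂ L] [FiniteDimensional ℂ L]
    [LieAlgebra.IsKilling ℂ L] {H : LieSubalgebra ℂ L} [H.IsCartanSubalgebra]
    {s : ℕ}

local notation "ιU" => UniversalEnvelopingAlgebra.ι ℂ

private theorem key_s11 (rt : Fin s → LieModule.Weight ℂ H L)
    (hnz : ∀ i, (rt i).IsNonZero)
    (hpos : ∀ w : LieModule.Weight ℂ H L, w.IsNonZero →
      (∃ i, ⇑w = ⇑(rt i)) ∨ (∃ i, ⇑w = -⇑(rt i)))
    (hdist : ∀ i j, ⇑(rt i) ≠ -⇑(rt j))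
    (x : Fin s → L) (hx : ∀ i, x i ∈ rootSpace H ⇑(rt i)) (hx0 : ∀ i, x i ≠ 0)
    (y : Fin s → L) (hy : ∀ i, y i ∈ rootSpace H (-⇑(rt i))) (hy0 : ∀ i, y i ≠ 0) :
    ∀ N : ℕ, ∀ (p q : Fin s → ℕ) (z : L),
      (∀ i j, p i ≠ 0 → q j ≠ 0 → i ≤ j) →
      ((∃ k, z ∈ rootSpace H ⇑(rt k) ∧
          ((∑ i, p i) + ∑ i, q i) * ((∑ i, p i) + ∑ i, q i) + (∑ i, q i) ≤ N) ∨
       (∃ m, z ∈ rootSpace H (-⇑(rt m)) ∧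
          ((∑ i, p i) + ∑ i, q i) * ((∑ i, p i) + ∑ i, q i) + invm p m q ≤ N)) →
      Ym y p * ιU z * Ym y q ∈ SS rt x y := by
  intro N
  induction N using Nat.strong_induction_on with
  | _ N ih =>
  intro p q z hsort htype
  -- helper : a middle factor lying in a root space of a nonzero functional
  have hbrk : ∀ (p' q' : Fin s → ℕ) (u : L) (χ : H → ℂ),
      (∀ i j, p' i ≠ 0 → q' j ≠ 0 → i ≤ j) →
      u ∈ rootSpace H χ → χ ≠ 0 →
      ((∑ i, p' i) + (∑ i, q' i) + 1) * ((∑ i, p' i) + (∑ i, q' i) + 1) ≤ N →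
      Ym y p' * ιU u * Ym y q' ∈ SS rt x y := by
    intro p' q' u χ hs hu hχ hNb
    rcases classify rt hpos hχ hu with rfl | ⟨k, hk⟩ | ⟨m, hm⟩
    · rw [map_zero, mul_zero, zero_mul]
      exact Submodule.zero_mem _
    · exact ih (((∑ i, p' i) + ∑ i, q' i) * ((∑ i, p' i) + ∑ i, q' i) + (∑ i, q' i))
        (meas_lt hNb (Nat.le_add_left _ _)) p' q' u hs (Or.inl ⟨k, hk, le_rfl⟩)
    · exact ih (((∑ i, p' i) + ∑ i, q' i) * ((∑ i, p' i) + ∑ i, q' i) + invm p' m q')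
        (meas_lt hNb (invm_le p' m q')) p' q' u hs (Or.inr ⟨m, hm, le_rfl⟩)
  rcases htype with ⟨k, hzk, hN⟩ | ⟨m, hzm, hN⟩
  -- ================= CASE X =================
  · by_cases hq0 : (∑ i, q i) = 0
    · -- terminal
      have hq : q = 0 := funext fun j => (Finset.sum_eq_zero_iff.mp hq0) j (Finset.mem_univ j)
      subst hq
      obtain ⟨c, hc⟩ := span_root
        (LieAlgebra.IsKilling.finrank_rootSpace_eq_one (rt k) (hnz k)) (hx k) (hx0 k) hzk
      rw [Ym_zero, mul_one, hc, map_smul, mul_smul_comm]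
      apply Submodule.smul_mem
      have := memSS_A (rt := rt) (x := x) (y := y) p (Pi.single k 1)
      rwa [Ym_single] at this
    · -- right-move
      have hqex : ∃ i, q i ≠ 0 := by
        by_contra h
        push_neg at h
        exact hq0 (Finset.sum_eq_zero fun i _ => h i)
      have hFne : (Finset.univ.filter (fun j => q j ≠ 0)).Nonempty :=
        ⟨hqex.choose, by simp [hqex.choose_spec]⟩
      set i := (Finset.univ.filter (fun j => q j ≠ 0)).min' hFne with hidef
      have hqi : q i ≠ 0 := by
        have := Finset.min'_mem _ hFne
        rw [← hidef] at this
        simpa using this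
      have himin : ∀ j, q j ≠ 0 → i ≤ j := fun j hj =>
        Finset.min'_le _ j (by simp [hj])
      set q' := Function.update q i (q i - 1) with hq'def
      have hq'le : ∀ j, q' j ≠ 0 → q j ≠ 0 := fun j hj => by
        rcases eq_or_ne j i with rfl | hji
        · exact hqi
        · rwa [hq'def, Function.update_of_ne hji] at hj
      have hsort' : ∀ a b, p a ≠ 0 → q' b ≠ 0 → a ≤ b :=
        fun a b ha hb => hsort a b ha (hq'le b hb)
      have hYq : Ym y q = ιU (y i) * Ym y q' := by
        conv_lhs => rw [update_decomp q i hqi]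
        rw [← Ym_mul y (Pi.single i 1) q' (fun a b ha hb => by
          rcases eq_or_ne a i with rfl | hne
          · exact himin b (hq'le b hb)
          · rw [Pi.single_eq_of_ne hne] at ha; exact absurd rfl ha), Ym_single]
      have hsw : ιU z * ιU (y i) = ιU (y i) * ιU z + ιU ⁅z, y i⁆ := by
        have h2 := LieHom.map_lie (UniversalEnvelopingAlgebra.ι ℂ) z (y i)
        rw [Ring.lie_def] at h2
        rw [h2]
        abel
      have hmain : Ym y p * ιU z * Ym y q
          = Ym y (p + Pi.single i 1) * ιU z * Ym y q'
            + Ym y p * ιU ⁅z, y i⁆ * Ym y q' := by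
        rw [hYq, ← Ym_mul y p (Pi.single i 1) (fun a b ha hb => by
          rcases eq_or_ne b i with rfl | hne
          · exact hsort a i ha hqi
          · rw [Pi.single_eq_of_ne hne] at hb; exact absurd rfl hb), Ym_single]
        calc Ym y p * ιU z * (ιU (y i) * Ym y q')
            = Ym y p * ((ιU z * ιU (y i)) * Ym y q') := by noncomm_ring
          _ = Ym y p * ((ιU (y i) * ιU z + ιU ⁅z, y i⁆) * Ym y q') := by rw [hsw]
          _ = Ym y p * ιU (y i) * ιU z * Ym y q' + Ym y p * ιU ⁅z, y i⁆ * Ym y q' := by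
              noncomm_ring
      rw [hmain]
      have hsums : (∑ j, (p + (Pi.single i 1 : Fin s → ℕ)) j) = (∑ j, p j) + 1 := by
        simp only [Pi.add_apply]
        rw [Finset.sum_add_distrib, sum_single]
      have hsumq : (∑ j, q' j) + 1 = ∑ j, q j := sum_update q i hqi
      apply Submodule.add_mem
      · -- main term via ih
        refine ih (((∑ j, p j) + ∑ j, q j) * ((∑ j, p j) + ∑ j, q j) + ∑ j, q' j)
          (lt_of_lt_of_le (Nat.add_lt_add_left (by omega) _) hN)
          (p + (Pi.single i 1 : Fin s → ℕ)) q' z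
          (fun a b ha hb => by
            rcases eq_or_ne a i with rfl | hne
            · exact himin b (hq'le b hb)
            · have hpa : p a ≠ 0 := by
                intro h0
                rw [Pi.add_apply, h0, Pi.single_eq_of_ne hne] at ha
                exact ha rfl
              exact hsort a b hpa (hq'le b hb))
          (Or.inl ⟨k, hzk, le_of_eq (by
            rw [show (∑ j, (p + (Pi.single i 1 : Fin s → ℕ)) j) + ∑ j, q' j
              = (∑ j, p j) + ∑ j, q j from by rw [hsums]; omega])⟩)
      · -- bracket term
        have hmem : ⁅z, y i⁆ ∈ rootSpace H (⇑(rt k) + (-⇑(rt i))) := by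
          have := mapsTo_toEnd_genWeightSpace_add_of_mem_rootSpace ℂ L H L
            ⇑(rt k) (-⇑(rt i)) hzk (hy i)
          rwa [LieModule.toEnd_apply_apply] at this
        by_cases hzero : (⇑(rt k) + (-⇑(rt i))) = (0 : ↥H → ℂ)
        · have heq : ⇑(rt i) = ⇑(rt k) := (add_neg_eq_zero.mp hzero).symm
          have hyik : y i ∈ rootSpace H (-⇑(rt k)) := by rw [← heq]; exact hy i
          obtain ⟨c, hc⟩ := brk_coroot (hnz k) hzk hyik
          rw [hc]
          exact hmid hy p q' hsort' c k
        · apply hbrk p q' ⁅z, y i⁆ _ hsort' hmem hzero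
          calc ((∑ j, p j) + (∑ j, q' j) + 1) * ((∑ j, p j) + (∑ j, q' j) + 1)
              = ((∑ j, p j) + ∑ j, q j) * ((∑ j, p j) + ∑ j, q j) := by congr 1 <;> omega
            _ ≤ N := le_trans (Nat.le_add_right _ _) hN
  -- ================= CASE Y =================
  · by_cases hpbad : ∃ a, p a ≠ 0 ∧ m < a
    · -- left-move
      obtain ⟨a0, ha0, hma0⟩ := hpbad
      have hFne : (Finset.univ.filter (fun j => p j ≠ 0)).Nonempty := ⟨a0, by simp [ha0]⟩
      set j := (Finset.univ.filter (fun j => p j ≠ 0)).max' hFne with hjdef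
      have hpj : p j ≠ 0 := by
        have := Finset.max'_mem _ hFne
        rw [← hjdef] at this
        simpa using this
      have hjmax : ∀ a, p a ≠ 0 → a ≤ j := fun a ha =>
        Finset.le_max' _ a (by simp [ha])
      have hmj : m < j := lt_of_lt_of_le hma0 (hjmax a0 ha0)
      set p' := Function.update p j (p j - 1) with hp'def
      have hp'le : ∀ a, p' a ≠ 0 → p a ≠ 0 := fun a ha => by
        rcases eq_or_ne a j with rfl | haj
        · exact hpj
        · rwa [hp'def, Function.update_of_ne haj] at ha
      have hYp : Ym y p = Ym y p' * ιU (y j) := by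
        have hpd : p = p' + (Pi.single j 1 : Fin s → ℕ) := by
          rw [add_comm]
          exact update_decomp p j hpj
        conv_lhs => rw [hpd]
        rw [← Ym_mul y p' (Pi.single j 1) (fun a b ha hb => by
          rcases eq_or_ne b j with rfl | hne
          · exact hjmax a (hp'le a ha)
          · rw [Pi.single_eq_of_ne hne] at hb; exact absurd rfl hb), Ym_single]
      have hYq2 : ιU (y j) * Ym y q = Ym y ((Pi.single j 1 : Fin s → ℕ) + q) := by
        rw [← Ym_single y j]
        exact Ym_mul y (Pi.single j 1) q (fun a b ha hb => by
          rcases eq_or_ne a j with rfl | hne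
          · exact hsort j b hpj hb
          · rw [Pi.single_eq_of_ne hne] at ha; exact absurd rfl ha)
      have hsw : ιU (y j) * ιU z = ιU z * ιU (y j) + ιU ⁅y j, z⁆ := by
        have h2 := LieHom.map_lie (UniversalEnvelopingAlgebra.ι ℂ) (y j) z
        rw [Ring.lie_def] at h2
        rw [h2]
        abel
      have hmain : Ym y p * ιU z * Ym y q
          = Ym y p' * ιU z * Ym y ((Pi.single j 1 : Fin s → ℕ) + q)
            + Ym y p' * ιU ⁅y j, z⁆ * Ym y q := by
        rw [hYp, ← hYq2]
        calc Ym y p' * ιU (y j) * ιU z * Ym y q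
            = Ym y p' * ((ιU (y j) * ιU z) * Ym y q) := by noncomm_ring
          _ = Ym y p' * ((ιU z * ιU (y j) + ιU ⁅y j, z⁆) * Ym y q) := by rw [hsw]
          _ = Ym y p' * ιU z * (ιU (y j) * Ym y q) + Ym y p' * ιU ⁅y j, z⁆ * Ym y q := by
              noncomm_ring
      rw [hmain]
      have hsump : (∑ a, p' a) + 1 = ∑ a, p a := sum_update p j hpj
      have hsumq : (∑ a, ((Pi.single j 1 : Fin s → ℕ) + q) a) = (∑ a, q a) + 1 := by
        simp only [Pi.add_apply]
        rw [Finset.sum_add_distrib, sum_single]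
        omega
      apply Submodule.add_mem
      · -- main term via ih
        refine ih (((∑ a, p a) + ∑ a, q a) * ((∑ a, p a) + ∑ a, q a)
            + invm p' m ((Pi.single j 1 : Fin s → ℕ) + q))
          (lt_of_lt_of_le (Nat.add_lt_add_left (invm_left p q m j hpj hmj) _) hN)
          p' _ z
          (fun a b ha hb => by
            rcases eq_or_ne b j with rfl | hne
            · exact hjmax a (hp'le a ha)
            · have hqb : q b ≠ 0 := by
                intro h0
                rw [Pi.add_apply, h0, Pi.single_eq_of_ne hne] at hb
                exact hb rfl
              exact hsort a b (hp'le a ha) hqb)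
          (Or.inr ⟨m, hzm, le_of_eq (by
            rw [show (∑ a, p' a) + (∑ a, ((Pi.single j 1 : Fin s → ℕ) + q) a)
              = (∑ a, p a) + ∑ a, q a from by rw [hsumq]; omega])⟩)
      · -- bracket term
        have hmem : ⁅y j, z⁆ ∈ rootSpace H ((-⇑(rt j)) + (-⇑(rt m))) := by
          have := mapsTo_toEnd_genWeightSpace_add_of_mem_rootSpace ℂ L H L
            (-⇑(rt j)) (-⇑(rt m)) (hy j) hzm
          rwa [LieModule.toEnd_apply_apply] at this
        have hzero : ((-⇑(rt j)) + (-⇑(rt m))) ≠ (0 : ↥H → ℂ) := by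
          intro h0
          apply hdist m j
          funext t
          have := congrFun h0 t
          simp only [Pi.add_apply, Pi.neg_apply, Pi.zero_apply] at this
          simp only [Pi.neg_apply]
          linear_combination -this
        apply hbrk p' q ⁅y j, z⁆ _ (fun a b ha hb => hsort a b (hp'le a ha) hb) hmem hzero
        calc ((∑ a, p' a) + (∑ a, q a) + 1) * ((∑ a, p' a) + (∑ a, q a) + 1)
            = ((∑ a, p a) + ∑ a, q a) * ((∑ a, p a) + ∑ a, q a) := by congr 1 <;> omega
          _ ≤ N := le_trans (Nat.le_add_right _ _) hN
    · push_neg at hpbad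
      have hpm : ∀ a, p a ≠ 0 → a ≤ m := fun a ha => by simpa [not_lt] using hpbad a ha
      by_cases hqbad : ∃ b, q b ≠ 0 ∧ b < m
      · -- right-move
        obtain ⟨b0, hb0, hbm0⟩ := hqbad
        have hFne : (Finset.univ.filter (fun j => q j ≠ 0)).Nonempty := ⟨b0, by simp [hb0]⟩
        set i := (Finset.univ.filter (fun j => q j ≠ 0)).min' hFne with hidef
        have hqi : q i ≠ 0 := by
          have := Finset.min'_mem _ hFne
          rw [← hidef] at this
          simpa using this
        have himin : ∀ b, q b ≠ 0 → i ≤ b := fun b hb =>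
          Finset.min'_le _ b (by simp [hb])
        have him : i < m := lt_of_le_of_lt (himin b0 hb0) hbm0
        set q' := Function.update q i (q i - 1) with hq'def
        have hq'le : ∀ b, q' b ≠ 0 → q b ≠ 0 := fun b hb => by
          rcases eq_or_ne b i with rfl | hbi
          · exact hqi
          · rwa [hq'def, Function.update_of_ne hbi] at hb
        have hsort' : ∀ a b, p a ≠ 0 → q' b ≠ 0 → a ≤ b :=
          fun a b ha hb => hsort a b ha (hq'le b hb)
        have hYq : Ym y q = ιU (y i) * Ym y q' := by
          conv_lhs => rw [update_decomp q i hqi]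
          rw [← Ym_mul y (Pi.single i 1) q' (fun a b ha hb => by
            rcases eq_or_ne a i with rfl | hne
            · exact himin b (hq'le b hb)
            · rw [Pi.single_eq_of_ne hne] at ha; exact absurd rfl ha), Ym_single]
        have hsw : ιU z * ιU (y i) = ιU (y i) * ιU z + ιU ⁅z, y i⁆ := by
          have h2 := LieHom.map_lie (UniversalEnvelopingAlgebra.ι ℂ) z (y i)
          rw [Ring.lie_def] at h2
          rw [h2]
          abel
        have hmain : Ym y p * ιU z * Ym y q
            = Ym y (p + Pi.single i 1) * ιU z * Ym y q'
              + Ym y p * ιU ⁅z, y i⁆ * Ym y q' := by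
          rw [hYq, ← Ym_mul y p (Pi.single i 1) (fun a b ha hb => by
            rcases eq_or_ne b i with rfl | hne
            · exact hsort a i ha hqi
            · rw [Pi.single_eq_of_ne hne] at hb; exact absurd rfl hb), Ym_single]
          calc Ym y p * ιU z * (ιU (y i) * Ym y q')
              = Ym y p * ((ιU z * ιU (y i)) * Ym y q') := by noncomm_ring
            _ = Ym y p * ((ιU (y i) * ιU z + ιU ⁅z, y i⁆) * Ym y q') := by rw [hsw]
            _ = Ym y p * ιU (y i) * ιU z * Ym y q' + Ym y p * ιU ⁅z, y i⁆ * Ym y q' := by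
                noncomm_ring
        rw [hmain]
        have hsums : (∑ a, (p + (Pi.single i 1 : Fin s → ℕ)) a) = (∑ a, p a) + 1 := by
          simp only [Pi.add_apply]
          rw [Finset.sum_add_distrib, sum_single]
        have hsumq : (∑ a, q' a) + 1 = ∑ a, q a := sum_update q i hqi
        apply Submodule.add_mem
        · refine ih (((∑ a, p a) + ∑ a, q a) * ((∑ a, p a) + ∑ a, q a)
              + invm (p + (Pi.single i 1 : Fin s → ℕ)) m q')
            (lt_of_lt_of_le (Nat.add_lt_add_left (invm_right p q m i hqi him) _) hN)
            (p + (Pi.single i 1 : Fin s → ℕ)) q' z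
            (fun a b ha hb => by
              rcases eq_or_ne a i with rfl | hne
              · exact himin b (hq'le b hb)
              · have hpa : p a ≠ 0 := by
                  intro h0
                  rw [Pi.add_apply, h0, Pi.single_eq_of_ne hne] at ha
                  exact ha rfl
                exact hsort a b hpa (hq'le b hb))
            (Or.inr ⟨m, hzm, le_of_eq (by
              rw [show (∑ a, (p + (Pi.single i 1 : Fin s → ℕ)) a) + ∑ a, q' a
                = (∑ a, p a) + ∑ a, q a from by rw [hsums]; omega])⟩)
        · have hmem : ⁅z, y i⁆ ∈ rootSpace H ((-⇑(rt m)) + (-⇑(rt i))) := by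
            have := mapsTo_toEnd_genWeightSpace_add_of_mem_rootSpace ℂ L H L
              (-⇑(rt m)) (-⇑(rt i)) hzm (hy i)
            rwa [LieModule.toEnd_apply_apply] at this
          have hzero : ((-⇑(rt m)) + (-⇑(rt i))) ≠ (0 : ↥H → ℂ) := by
            intro h0
            apply hdist m i
            funext t
            have := congrFun h0 t
            simp only [Pi.add_apply, Pi.neg_apply, Pi.zero_apply] at this
            simp only [Pi.neg_apply]
            linear_combination -this
          apply hbrk p q' ⁅z, y i⁆ _ hsort' hmem hzero
          calc ((∑ a, p a) + (∑ a, q' a) + 1) * ((∑ a, p a) + (∑ a, q' a) + 1)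
              = ((∑ a, p a) + ∑ a, q a) * ((∑ a, p a) + ∑ a, q a) := by congr 1 <;> omega
            _ ≤ N := le_trans (Nat.le_add_right _ _) hN
      · -- terminal for Y
        push_neg at hqbad
        have hqm : ∀ b, q b ≠ 0 → m ≤ b := fun b hb => by simpa [not_lt] using hqbad b hb
        have hnm : (-(rt m) : LieModule.Weight ℂ H L).IsNonZero :=
          fun h0 => hnz m (neg_eq_zero.mp h0)
        obtain ⟨c, hc⟩ := span_root
          (LieAlgebra.IsKilling.finrank_rootSpace_eq_one (-(rt m)) hnm) (hy m) (hy0 m) hzm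
        rw [hc, map_smul, mul_smul_comm, smul_mul_assoc]
        apply Submodule.smul_mem
        rw [mul_assoc, show ιU (y m) * Ym y q = Ym y ((Pi.single m 1 : Fin s → ℕ) + q) from by
            rw [← Ym_single y m]
            exact Ym_mul y (Pi.single m 1) q (fun a b ha hb => by
              rcases eq_or_ne a m with rfl | hne
              · exact hqm b hb
              · rw [Pi.single_eq_of_ne hne] at ha; exact absurd rfl ha),
          Ym_mul y p _ (fun a b ha hb => by
            rcases eq_or_ne b m with rfl | hne
            · exact hpm a ha
            · have hqb : q b ≠ 0 := by
                intro h0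
                rw [Pi.add_apply, h0, Pi.single_eq_of_ne hne] at hb
                exact hb rfl
              exact hsort a b ha hqb)]
        exact memSS_Y _

end XposKey2
/-- (3.1.1) Let `𝔤` be a complex semisimple Lie algebra with Cartan subalgebra `H`,
`α_1, …, α_s` an enumeration of the positive roots `Φ⁺` of a system of positive roots,
`x_i ≠ 0` a root vector for `α_i` and `y_i ≠ 0` a root vector for `-α_i`, and
`h_γ` the coroot of a root `γ`.  For a multi-index `n` write
`X₋^{·n} = y_1^{n_1} ⋯ y_s^{n_s}` and `X₊^{·n} = x_1^{n_1} ⋯ x_s^{n_s}` inside the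
universal enveloping algebra `𝒰`.  Then for every positive root `α = α_{i₀}` and any
`n`, the element `x_α · X₋^{·n}` lies in the `ℂ`-span of the elements
`X₋^{·a} X₊^{·b}` together with the elements `X₋^{·a} h_γ`, `γ ∈ Φ⁺`. -/
theorem xpos_mul_Xneg_mem_span
    (L : Type*) [LieRing L] [LieAlgebra ℂ L] [FiniteDimensional ℂ L]
    [LieAlgebra.IsKilling ℂ L]
    (H : LieSubalgebra ℂ L) [H.IsCartanSubalgebra]
    (s : ℕ) (rt : Fin s → LieModule.Weight ℂ H L)
    (hnz : ∀ i, (rt i).IsNonZero)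
    -- `rt` enumerates a system of positive roots: every root is `± rt i` …
    (hpos : ∀ w : LieModule.Weight ℂ H L, w.IsNonZero →
      (∃ i, ⇑w = ⇑(rt i)) ∨ (∃ i, ⇑w = -⇑(rt i)))
    -- … and no `rt i` is the negative of another
    (hdist : ∀ i j, ⇑(rt i) ≠ -⇑(rt j))
    -- the chosen nonzero root vectors
    (x : Fin s → L) (hx : ∀ i, x i ∈ rootSpace H ⇑(rt i)) (hx0 : ∀ i, x i ≠ 0)
    (y : Fin s → L) (hy : ∀ i, y i ∈ rootSpace H (-⇑(rt i))) (hy0 : ∀ i, y i ≠ 0)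
    (i₀ : Fin s) (n : Fin s → ℕ) :
    (UniversalEnvelopingAlgebra.ι ℂ (x i₀)) *
        ((List.finRange s).map
          (fun i => (UniversalEnvelopingAlgebra.ι ℂ (y i) :
              UniversalEnvelopingAlgebra ℂ L) ^ n i)).prod ∈
      Submodule.span ℂ
        ({ u : UniversalEnvelopingAlgebra ℂ L |
            ∃ a b : Fin s → ℕ,
              u = ((List.finRange s).map
                    (fun i => (UniversalEnvelopingAlgebra.ι ℂ (y i) :
                        UniversalEnvelopingAlgebra ℂ L) ^ a i)).prod *
                  ((List.finRange s).map
                    (fun i => (UniversalEnvelopingAlgebra.ι ℂ (x i) :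
                        UniversalEnvelopingAlgebra ℂ L) ^ b i)).prod } ∪
         { u : UniversalEnvelopingAlgebra ℂ L |
            ∃ (a : Fin s → ℕ) (j : Fin s),
              u = ((List.finRange s).map
                    (fun i => (UniversalEnvelopingAlgebra.ι ℂ (y i) :
                        UniversalEnvelopingAlgebra ℂ L) ^ a i)).prod *
                  UniversalEnvelopingAlgebra.ι ℂ
                    ((LieAlgebra.IsKilling.coroot (rt j) : H) : L) }) := by
  have h := key_s11 rt hnz hpos hdist x hx hx0 y hy hy0
    ((((∑ i, (0 : Fin s → ℕ) i) + ∑ i, n i) * ((∑ i, (0 : Fin s → ℕ) i) + ∑ i, n i))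
      + ∑ i, n i)
    0 n (x i₀) (fun i j hi _ => absurd rfl hi) (Or.inl ⟨i₀, hx i₀, le_rfl⟩)
  rw [Ym_zero, one_mul] at h
  exact h
end

section
/- Let V be a finite-dimensional ℚ_p-vector space, T : V → V a ℚ_p-linear map with characteristic polynomial m(X) ∈ ℚ_p[X], and α ∈ ℚ. Then the polynomial m_α(X) = ∏_{μ : v_p(μ) ≠ α} (X − μ) (product over the roots μ of m in an algebraic closure of ℚ_p, counted with multiplicity, whose valuation is not α) has coefficients in ℚ_p; the subspace V^α := m_α(T)(V) is T-invariant; every root of the characteristic polynomial of the restriction of T to V^α has p-adic valuation equal to α; and dim_{ℚ_p} V^α equals the number of roots μ of m(X) with v_p(μ) = α, counted with multiplicity. -/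
open Polynomial
open scoped Classical

section Aux

variable {K : Type*} [Field K] {V : Type*} [AddCommGroup V] [Module K V]

lemma aeval_restrict_coe (T : V →ₗ[K] V) {W : Submodule K V}
    (h : ∀ x ∈ W, T x ∈ W) (P : Polynomial K) (x : W) :
    ((aeval (T.restrict h) P) x : V) = (aeval T P) (x : V) := by
  induction P using Polynomial.induction_on' with
  | add p q hp hq => simp [hp, hq]
  | monomial n a =>
      simp only [aeval_monomial, Module.End.mul_apply, Module.algebraMap_end_apply,
        SetLike.val_smul]
      congr 1
      rw [Module.End.pow_restrict]
      exact LinearMap.restrict_coe_apply _ _ _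

open LinearMap Module in
lemma charpoly_mul_of_isCompl [FiniteDimensional K V] (T : V →ₗ[K] V)
    {U W : Submodule K V} (h : IsCompl U W)
    (hU : ∀ x ∈ U, T x ∈ U) (hW : ∀ x ∈ W, T x ∈ W) :
    T.charpoly = (T.restrict hU).charpoly * (T.restrict hW).charpoly := by
  let F := T.restrict hU
  let G := T.restrict hW
  let ψ := F.prodMap G
  let e := Submodule.prodEquivOfIsCompl U W h
  let bU := Module.Free.chooseBasis K U
  let bW := Module.Free.chooseBasis K W
  let b := bU.prod bW
  have hψ : ψ = e.symm.conj T := by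
    apply b.ext
    simp only [Basis.prod_apply, coe_inl, coe_inr, prodMap_apply, LinearEquiv.conj_apply,
      LinearEquiv.symm_symm, Submodule.coe_prodEquivOfIsCompl, coe_comp, LinearEquiv.coe_coe,
      Function.comp_apply, coprod_apply, Submodule.coe_subtype, map_add, Sum.forall, Sum.elim_inl,
      map_zero, ZeroMemClass.coe_zero, add_zero, LinearEquiv.eq_symm_apply, and_self,
      Submodule.coe_prodEquivOfIsCompl', restrict_coe_apply, implies_true, Sum.elim_inr, zero_add,
      e, ψ, F, G, b]
  rw [← e.symm.charpoly_conj T, ← hψ, LinearMap.charpoly_prodMap]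

lemma isRoot_of_charpoly_isRoot {L : Type*} [Field L] [IsAlgClosed L] [Algebra K L]
    [FiniteDimensional K V]
    (S : V →ₗ[K] V) (r : Polynomial K) (hr : aeval S r = 0) (μ : L)
    (hμ : (S.charpoly.map (algebraMap K L)).IsRoot μ) :
    (r.map (algebraMap K L)).IsRoot μ := by
  classical
  set b := Module.Free.chooseBasis K V with hb
  set M := LinearMap.toMatrix b b S with hMdef
  set M' := M.map (algebraMap K L) with hM'def
  have h1 : S.charpoly.map (algebraMap K L) = M'.charpoly := by
    rw [← LinearMap.charpoly_toMatrix S b, ← Matrix.charpoly_map]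
  have h2 : (Matrix.scalar _ μ - M').det = 0 := by
    have h3 := hμ
    rw [h1] at h3
    have h4 := _root_.eval_det (Matrix.charmatrix M') μ
    rw [Matrix.charpoly] at h3
    rw [Polynomial.IsRoot, h4, Matrix.matPolyEquiv_charmatrix] at h3
    simpa using h3
  obtain ⟨v, hv0, hv⟩ := Matrix.exists_mulVec_eq_zero_iff.mpr h2
  have hMv : M'.mulVec v = μ • v := by
    have h5 := hv
    rw [Matrix.sub_mulVec, sub_eq_zero] at h5
    rw [← h5]
    funext i
    simp [Matrix.scalar_apply, Matrix.mulVec_diagonal]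
  let g : ((Module.Free.ChooseBasisIndex K V) → L) →ₗ[L] ((Module.Free.ChooseBasisIndex K V) → L) :=
    Matrix.toLinAlgEquiv' M'
  have heig : Module.End.HasEigenvector g μ v :=
    ⟨Module.End.mem_eigenspace_iff.mpr (by simpa [g, Matrix.toLinAlgEquiv'_apply] using hMv), hv0⟩
  have hM : aeval M r = 0 := by
    have h6 : aeval ((LinearMap.toMatrixAlgEquiv b).toAlgHom S) r
        = (LinearMap.toMatrixAlgEquiv b).toAlgHom (aeval S r) :=
      Polynomial.aeval_algHom_apply _ _ _
    rw [hr, map_zero] at h6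
    rw [← h6]
    rfl
  have hM' : aeval M' (r.map (algebraMap K L)) = 0 := by
    rw [Polynomial.aeval_map_algebraMap]
    have h7 : M' = (AlgHom.mapMatrix (Algebra.ofId K L)) M := by
      ext i j
      simp [hM'def, Algebra.ofId_apply]
    rw [h7, Polynomial.aeval_algHom_apply, hM, map_zero]
  have hg : aeval g (r.map (algebraMap K L)) = 0 := by
    show aeval ((Matrix.toLinAlgEquiv').toAlgHom M') _ = 0
    rw [Polynomial.aeval_algHom_apply, hM', map_zero]
  have h8 := Module.End.aeval_apply_of_hasEigenvector (p := r.map (algebraMap K L)) heig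
  rw [hg] at h8
  simp only [LinearMap.zero_apply] at h8
  rcases smul_eq_zero.mp h8.symm with h | h
  · exact h
  · exact absurd h hv0

end Aux

lemma padicValExt_eq_of_root (p : ℕ) [Fact p.Prime] (f : Polynomial ℚ_[p])
    (hirr : Irreducible f) (hmon : f.Monic) (μ : AlgebraicClosure ℚ_[p])
    (hroot : Polynomial.aeval μ f = 0) :
    padicValExt p μ = (if f = X then (⊤ : WithTop ℚ)
      else ((((f.coeff 0).valuation : ℚ) / (f.natDegree : ℚ) : ℚ) : WithTop ℚ)) := by
  have hmin : minpoly ℚ_[p] μ = f := (minpoly.eq_of_irreducible_of_monic hirr hroot hmon).symm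
  by_cases h0 : μ = 0
  · subst h0
    rw [minpoly.zero] at hmin
    rw [← hmin]
    simp [padicValExt]
  · have hX : f ≠ X := by
      intro h
      rw [h] at hroot
      simp only [aeval_X] at hroot
      exact h0 hroot
    rw [← hmin] at hX ⊢
    simp [padicValExt, h0, hX]

/-- Let `V` be a finite-dimensional `ℚ_p`-vector space, `T : V → V` linear with
characteristic polynomial `m`, and `α ∈ ℚ`. Then `m_α(X) = ∏_{v_p(μ) ≠ α} (X - μ)`
(over the roots of `m` in an algebraic closure, with multiplicity) has coefficients in
`ℚ_p`; the subspace `V^α = m_α(T)(V)` is `T`-invariant; every root of the characteristic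
polynomial of `T` restricted to `V^α` has valuation `α`; and `dim V^α` is the number of
roots `μ` of `m` with `v_p(μ) = α`, with multiplicity. -/
theorem slope_subspace_properties (p : ℕ) [Fact p.Prime]
    (V : Type*) [AddCommGroup V] [Module ℚ_[p] V] [FiniteDimensional ℚ_[p] V]
    (T : V →ₗ[ℚ_[p]] V) (α : ℚ)
    (mα : Polynomial (AlgebraicClosure ℚ_[p]))
    (hmα : mα = (((T.charpoly.map (algebraMap ℚ_[p] (AlgebraicClosure ℚ_[p]))).roots.filter
        (fun μ => padicValExt p μ ≠ (α : WithTop ℚ))).map (fun μ => X - C μ)).prod) :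
    (∃ q : Polynomial ℚ_[p], q.map (algebraMap ℚ_[p] (AlgebraicClosure ℚ_[p])) = mα) ∧
    ∀ q : Polynomial ℚ_[p], q.map (algebraMap ℚ_[p] (AlgebraicClosure ℚ_[p])) = mα →
      (∀ v ∈ LinearMap.range (aeval T q), T v ∈ LinearMap.range (aeval T q)) ∧
      ∀ hinv : ∀ v ∈ LinearMap.range (aeval T q), T v ∈ LinearMap.range (aeval T q),
        (∀ μ ∈ ((T.restrict hinv).charpoly.map
            (algebraMap ℚ_[p] (AlgebraicClosure ℚ_[p]))).roots,
          padicValExt p μ = (α : WithTop ℚ)) ∧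
        Module.finrank ℚ_[p] (LinearMap.range (aeval T q)) =
          Multiset.card ((T.charpoly.map (algebraMap ℚ_[p] (AlgebraicClosure ℚ_[p]))).roots.filter
            (fun μ => padicValExt p μ = (α : WithTop ℚ))) := by
  classical
  set φ := algebraMap ℚ_[p] (AlgebraicClosure ℚ_[p]) with hφ
  have hφinj : Function.Injective φ := φ.injective
  have hm_monic : T.charpoly.Monic := T.charpoly_monic
  have hm_ne : T.charpoly ≠ 0 := hm_monic.ne_zero
  set fs := UniqueFactorizationMonoid.normalizedFactors T.charpoly with hfs
  have hfs_irr : ∀ f ∈ fs, Irreducible f := fun f hf =>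
    UniqueFactorizationMonoid.irreducible_of_normalized_factor f hf
  have hfs_mono : ∀ f ∈ fs, f.Monic := by
    intro f hf
    have h1 : normalize f = f := UniqueFactorizationMonoid.normalize_normalized_factor f hf
    rw [← h1]
    exact Polynomial.monic_normalize (hfs_irr f hf).ne_zero
  have hmonprod : ∀ (s : Multiset (Polynomial ℚ_[p])), (∀ f ∈ s, f.Monic) → s.prod.Monic := by
    intro s h
    have := Polynomial.monic_multiset_prod_of_monic s id (fun f hf => h f hf)
    simpa using this
  have hprod : fs.prod = T.charpoly := by
    apply Polynomial.eq_of_monic_of_associated (hmonprod fs hfs_mono) hm_monic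
      (UniqueFactorizationMonoid.prod_normalizedFactors hm_ne)
  -- the valuation attached to an irreducible monic polynomial
  set w : Polynomial ℚ_[p] → WithTop ℚ := fun f =>
    if f = X then (⊤ : WithTop ℚ)
    else ((((f.coeff 0).valuation : ℚ) / (f.natDegree : ℚ) : ℚ) : WithTop ℚ) with hw
  set P : Polynomial ℚ_[p] → Prop := fun f => w f = (α : WithTop ℚ) with hP
  set q : Polynomial ℚ_[p] := (fs.filter (fun f => ¬ P f)).prod with hq
  set r : Polynomial ℚ_[p] := (fs.filter P).prod with hr
  have hq_monic : q.Monic := hmonprod _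
    (fun f hf => hfs_mono f (Multiset.mem_of_le (Multiset.filter_le _ _) hf))
  have hr_monic : r.Monic := hmonprod _
    (fun f hf => hfs_mono f (Multiset.mem_of_le (Multiset.filter_le _ _) hf))
  have hqr : q * r = T.charpoly := by
    rw [hq, hr, ← Multiset.prod_add]
    rw [show fs.filter (fun f => ¬ P f) + fs.filter P = fs by
      rw [add_comm]; exact Multiset.filter_add_not _ _]
    exact hprod
  -- roots of products of factors
  have key : ∀ (s : Multiset (Polynomial ℚ_[p])), (∀ f ∈ s, f ∈ fs) →
      ∀ μ ∈ ((s.prod).map φ).roots, ∃ f ∈ s, Polynomial.aeval μ f = 0 := by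
    intro s hs μ hμ
    have h1 : Polynomial.eval μ ((s.prod).map φ) = 0 := (Polynomial.mem_roots'.mp hμ).2
    rw [Polynomial.map_multiset_prod, Polynomial.eval_multiset_prod] at h1
    rw [Multiset.prod_eq_zero_iff] at h1
    rw [Multiset.mem_map] at h1
    obtain ⟨g, hg, hg0⟩ := h1
    rw [Multiset.mem_map] at hg
    obtain ⟨f, hf, rfl⟩ := hg
    refine ⟨f, hf, ?_⟩
    rw [Polynomial.aeval_def, ← Polynomial.eval_map]
    exact hg0
  have hq_val : ∀ μ ∈ (q.map φ).roots, padicValExt p μ ≠ (α : WithTop ℚ) := by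
    intro μ hμ
    obtain ⟨f, hf, hroot⟩ := key _ (fun f hf => Multiset.mem_of_le (Multiset.filter_le _ _) hf) μ hμ
    obtain ⟨hffs, hfP⟩ := Multiset.mem_filter.mp hf
    rw [padicValExt_eq_of_root p f (hfs_irr f hffs) (hfs_mono f hffs) μ hroot]
    exact hfP
  have hr_val : ∀ μ ∈ (r.map φ).roots, padicValExt p μ = (α : WithTop ℚ) := by
    intro μ hμ
    obtain ⟨f, hf, hroot⟩ := key _ (fun f hf => Multiset.mem_of_le (Multiset.filter_le _ _) hf) μ hμ
    obtain ⟨hffs, hfP⟩ := Multiset.mem_filter.mp hf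
    rw [padicValExt_eq_of_root p f (hfs_irr f hffs) (hfs_mono f hffs) μ hroot]
    exact hfP
  have hroots_add : (T.charpoly.map φ).roots = (q.map φ).roots + (r.map φ).roots := by
    rw [← hqr, Polynomial.map_mul, Polynomial.roots_mul]
    exact mul_ne_zero (hq_monic.map φ).ne_zero (hr_monic.map φ).ne_zero
  have hfilter_ne : ((T.charpoly.map φ).roots.filter
      (fun μ => padicValExt p μ ≠ (α : WithTop ℚ))) = (q.map φ).roots := by
    rw [hroots_add, Multiset.filter_add, Multiset.filter_eq_self.mpr hq_val,
      Multiset.filter_eq_nil.mpr (fun μ hμ h => h (hr_val μ hμ)), add_zero]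
  have hqmap : q.map φ = mα := by
    rw [hmα, hfilter_ne]
    exact (IsAlgClosed.splits _).eq_prod_roots_of_monic (hq_monic.map φ)
  -- coprimality
  have hco : IsCoprime q r := by
    apply isCoprime_of_irreducible_dvd
    · rintro ⟨h1, -⟩
      exact hq_monic.ne_zero h1
    · intro z hz hzq hzr
      have hzp : Prime z := (UniqueFactorizationMonoid.irreducible_iff_prime).mp hz
      obtain ⟨f₁, hf₁, hzf₁⟩ := hzp.exists_mem_multiset_dvd hzq
      obtain ⟨f₂, hf₂, hzf₂⟩ := hzp.exists_mem_multiset_dvd hzr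
      obtain ⟨hf₁fs, hf₁P⟩ := Multiset.mem_filter.mp hf₁
      obtain ⟨hf₂fs, hf₂P⟩ := Multiset.mem_filter.mp hf₂
      have ha₁ : Associated z f₁ := hz.associated_of_dvd (hfs_irr f₁ hf₁fs) hzf₁
      have ha₂ : Associated z f₂ := hz.associated_of_dvd (hfs_irr f₂ hf₂fs) hzf₂
      have : f₁ = f₂ := Polynomial.eq_of_monic_of_associated (hfs_mono f₁ hf₁fs)
        (hfs_mono f₂ hf₂fs) (ha₁.symm.trans ha₂)
      rw [this] at hf₁P
      exact hf₁P hf₂P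
  obtain ⟨u, v', huv⟩ := hco
  refine ⟨⟨q, hqmap⟩, ?_⟩
  intro q' hq'
  have hq'q : q' = q := Polynomial.map_injective φ hφinj (hq'.trans hqmap.symm)
  subst hq'q
  have hcomm : ∀ (s : Polynomial ℚ_[p]), (aeval T s) * T = T * (aeval T s) := by
    intro s
    have h1 : aeval T (s * X) = aeval T (X * s) := by rw [mul_comm]
    simpa [map_mul, aeval_X] using h1
  have hinvq : ∀ v ∈ LinearMap.range (aeval T q), T v ∈ LinearMap.range (aeval T q) := by
    rintro _ ⟨y, rfl⟩
    refine ⟨T y, ?_⟩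
    have h2 := congrArg (fun g => g y) (hcomm q)
    simpa [Module.End.mul_apply] using h2
  refine ⟨hinvq, ?_⟩
  intro hinv
  have hinvr : ∀ v ∈ LinearMap.range (aeval T r), T v ∈ LinearMap.range (aeval T r) := by
    rintro _ ⟨y, rfl⟩
    refine ⟨T y, ?_⟩
    have h2 := congrArg (fun g => g y) (hcomm r)
    simpa [Module.End.mul_apply] using h2
  have hATr : ∀ x, x ∈ LinearMap.range (aeval T q) → (aeval T r) x = 0 := by
    rintro _ ⟨y, rfl⟩
    have h1 : (aeval T r * aeval T q) y = 0 := by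
      rw [← map_mul, mul_comm r q, hqr, LinearMap.aeval_self_charpoly]
      simp
    simpa [Module.End.mul_apply] using h1
  have hATq : ∀ x, x ∈ LinearMap.range (aeval T r) → (aeval T q) x = 0 := by
    rintro _ ⟨y, rfl⟩
    have h1 : (aeval T q * aeval T r) y = 0 := by
      rw [← map_mul, hqr, LinearMap.aeval_self_charpoly]
      simp
    simpa [Module.End.mul_apply] using h1
  have hcompl : IsCompl (LinearMap.range (aeval T q)) (LinearMap.range (aeval T r)) := by
    constructor
    · rw [Submodule.disjoint_def]
      intro x hxq hxr
      have h1 : (aeval T q) x = 0 := hATq x hxr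
      have h2 : (aeval T r) x = 0 := hATr x hxq
      have h3 : (aeval T (u * q + v' * r)) x = x := by rw [huv]; simp
      rw [map_add, map_mul, map_mul] at h3
      simp only [LinearMap.add_apply, Module.End.mul_apply, h1, h2, map_zero, add_zero] at h3
      exact h3.symm
    · rw [codisjoint_iff, eq_top_iff]
      intro x _
      have h3 : (aeval T (q * u + r * v')) x = x := by
        rw [show q * u + r * v' = u * q + v' * r by ring, huv]; simp
      rw [map_add, map_mul, map_mul] at h3
      simp only [LinearMap.add_apply, Module.End.mul_apply] at h3
      rw [← h3]
      exact Submodule.add_mem_sup ⟨_, rfl⟩ ⟨_, rfl⟩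
  have hsplitm : T.charpoly = (T.restrict hinv).charpoly * (T.restrict hinvr).charpoly :=
    charpoly_mul_of_isCompl T hcompl hinv hinvr
  have hFr : aeval (T.restrict hinv) r = 0 := by
    apply LinearMap.ext
    intro x
    apply Subtype.ext
    rw [show (((aeval (T.restrict hinv) r) x : _) : V) = (aeval T r) (x : V) from
      aeval_restrict_coe T hinv r x]
    rw [hATr _ x.2]
    rfl
  have hGq : aeval (T.restrict hinvr) q = 0 := by
    apply LinearMap.ext
    intro x
    apply Subtype.ext
    rw [show (((aeval (T.restrict hinvr) q) x : _) : V) = (aeval T q) (x : V) from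
      aeval_restrict_coe T hinvr q x]
    rw [hATq _ x.2]
    rfl
  have hFroots : ∀ μ ∈ ((T.restrict hinv).charpoly.map φ).roots,
      padicValExt p μ = (α : WithTop ℚ) := by
    intro μ hμ
    have h1 : (r.map φ).IsRoot μ :=
      isRoot_of_charpoly_isRoot (T.restrict hinv) r hFr μ (Polynomial.mem_roots'.mp hμ).2
    exact hr_val μ (Polynomial.mem_roots'.mpr ⟨(hr_monic.map φ).ne_zero, h1⟩)
  have hGroots : ∀ μ ∈ ((T.restrict hinvr).charpoly.map φ).roots,
      ¬ padicValExt p μ = (α : WithTop ℚ) := by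
    intro μ hμ
    have h1 : (q.map φ).IsRoot μ :=
      isRoot_of_charpoly_isRoot (T.restrict hinvr) q hGq μ (Polynomial.mem_roots'.mp hμ).2
    exact hq_val μ (Polynomial.mem_roots'.mpr ⟨(hq_monic.map φ).ne_zero, h1⟩)
  refine ⟨hFroots, ?_⟩
  have hroots2 : (T.charpoly.map φ).roots
      = ((T.restrict hinv).charpoly.map φ).roots + ((T.restrict hinvr).charpoly.map φ).roots := by
    rw [hsplitm, Polynomial.map_mul, Polynomial.roots_mul]
    exact mul_ne_zero ((T.restrict hinv).charpoly_monic.map φ).ne_zero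
      ((T.restrict hinvr).charpoly_monic.map φ).ne_zero
  rw [hroots2, Multiset.filter_add, Multiset.filter_eq_self.mpr hFroots,
    Multiset.filter_eq_nil.mpr hGroots, add_zero,
    Polynomial.splits_iff_card_roots.mp (IsAlgClosed.splits _),
    Polynomial.natDegree_map, LinearMap.charpoly_natDegree]
end
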